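/- arXiv:math/0208196 — 11 statements merged into one kernel-verified Lean document; each statement's English description precedes it below -/
import Mathlib

section
/- Let Φ : [0,∞)^n → [0,∞) be such that d_Φ is a metric on the product of every choice of n metric spaces. Then Φ satisfies (A): Φ(q) = 0 iff q = 0, and (B): for all q¹,q²,q³ ∈ [0,∞)^n with qʲ ≤ qᵏ + qˡ for every permutation {j,k,l} of {1,2,3}, Φ(qʲ) ≤ Φ(qᵏ) + Φ(qˡ). -/
lemma euclid_realize (a b c : ℝ) (ha : 0 ≤ a) (hb : 0 ≤ b) (hc : 0 ≤ c)
    (h1 : a ≤ b + c) (h2 : b ≤ a + c) (h3 : c ≤ a + b) :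
    ∃ x y z : ℂ, dist x y = c ∧ dist x z = b ∧ dist y z = a := by
  by_cases hc0 : c = 0
  · have hab : a = b := by linarith
    refine ⟨0, 0, (b : ℂ), by simp [hc0], ?_, ?_⟩
    · rw [Complex.dist_eq_re_im]; simp [Real.sqrt_sq_eq_abs, abs_of_nonneg hb]
    · rw [Complex.dist_eq_re_im]; simp [Real.sqrt_sq_eq_abs, abs_of_nonneg hb, hab]
  · have hcpos : 0 < c := lt_of_le_of_ne hc (Ne.symm hc0)
    obtain ⟨u, hu⟩ : ∃ u : ℝ, u = (c^2 + b^2 - a^2) / (2*c) := ⟨_, rfl⟩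
    have hcu : 2 * c * u = c^2 + b^2 - a^2 := by rw [hu]; field_simp
    have hkey : u^2 ≤ b^2 := by
      have hprod : 0 ≤ (b + c - a) * (a + b - c) * (a + c - b) * (a + b + c) := by
        apply mul_nonneg; apply mul_nonneg; apply mul_nonneg <;> linarith
        all_goals linarith
      nlinarith [sq_nonneg c, mul_pos hcpos hcpos, sq_nonneg (2*c*u - c^2 - b^2 + a^2)]
    obtain ⟨v, hv⟩ : ∃ v : ℝ, v = Real.sqrt (b^2 - u^2) := ⟨_, rfl⟩
    have hv2 : v^2 = b^2 - u^2 := by rw [hv]; exact Real.sq_sqrt (by linarith)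
    refine ⟨0, (c : ℂ), ⟨u, v⟩, ?_, ?_, ?_⟩
    · rw [Complex.dist_eq_re_im]; simp [Real.sqrt_sq_eq_abs, abs_of_nonneg hc]
    · rw [Complex.dist_eq_re_im]
      have h : ((0:ℂ).re - (Complex.mk u v).re)^2 + ((0:ℂ).im - (Complex.mk u v).im)^2 = b^2 := by
        show ((0:ℝ) - u)^2 + ((0:ℝ) - v)^2 = b^2
        nlinarith [hv2]
      rw [h, Real.sqrt_sq hb]
    · rw [Complex.dist_eq_re_im]
      have h : (((c:ℝ):ℂ).re - (Complex.mk u v).re)^2 + (((c:ℝ):ℂ).im - (Complex.mk u v).im)^2 = a^2 := by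
        show ((c:ℝ) - u)^2 + ((0:ℝ) - v)^2 = a^2
        nlinarith [hv2, hcu]
      rw [h, Real.sqrt_sq ha]

/-- If `d_Φ` is a metric on the product of every choice of `n` metric
spaces, then `Φ` satisfies conditions (A) and (B). -/
theorem stmt_1 {n : ℕ} (Φ : (Fin n → ℝ) → ℝ)
    (hpos : ∀ q : Fin n → ℝ, 0 ≤ q → 0 ≤ Φ q)
    (hmetric : ∀ (X : Fin n → Type) (_ : ∀ i, MetricSpace (X i)),
      (∀ x y : ∀ i, X i, (Φ (fun i => dist (x i) (y i)) = 0 ↔ x = y)) ∧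
      (∀ x y : ∀ i, X i, Φ (fun i => dist (x i) (y i)) = Φ (fun i => dist (y i) (x i))) ∧
      (∀ x y z : ∀ i, X i, Φ (fun i => dist (x i) (z i)) ≤
        Φ (fun i => dist (x i) (y i)) + Φ (fun i => dist (y i) (z i)))) :
    (∀ q : Fin n → ℝ, 0 ≤ q → (Φ q = 0 ↔ q = 0)) ∧
    (∀ q1 q2 q3 : Fin n → ℝ, 0 ≤ q1 → 0 ≤ q2 → 0 ≤ q3 →
      q1 ≤ q2 + q3 → q2 ≤ q1 + q3 → q3 ≤ q1 + q2 →
      Φ q1 ≤ Φ q2 + Φ q3) := by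
  constructor
  · intro q hq
    obtain ⟨heq, -, -⟩ := hmetric (fun _ => ℝ) (fun _ => inferInstance)
    have h := heq q 0
    have hd : (fun i => dist (q i) ((0 : ∀ _ : Fin n, ℝ) i)) = q := by
      funext i
      simp [Real.dist_eq, abs_of_nonneg (hq i)]
    rw [hd] at h
    exact h
  · intro q1 q2 q3 hq1 hq2 hq3 h1 h2 h3
    choose x y z hxy hxz hyz using fun i =>
      euclid_realize (q1 i) (q2 i) (q3 i) (hq1 i) (hq2 i) (hq3 i)
        (by have := h1 i; simpa using this)
        (by have := h2 i; simpa using this)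
        (by have := h3 i; simpa using this)
    obtain ⟨-, hsymm, htri⟩ := hmetric (fun _ => ℂ) (fun _ => inferInstance)
    have key := htri y x z
    have e1 : (fun i => dist (y i) (z i)) = q1 := funext fun i => hyz i
    have e2 : (fun i => dist (x i) (z i)) = q2 := funext fun i => hxz i
    have e3 : (fun i => dist (x i) (y i)) = q3 := funext fun i => hxy i
    rw [e1] at key
    rw [hsymm y x, e3, e2] at key
    linarith
end

section
/- Let Ψ : ℝ^n → [0,∞) be a norm with Ψ(x₁,...,xₙ) = Ψ(|x₁|,...,|xₙ|) for all x (i.e. Ψ is invariant under sign changes of coordinates). Then Ψ is monotone on [0,∞)^n: if 0 ≤ q ≤ p componentwise, then Ψ(q) ≤ Ψ(p). -/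
/-- A norm `Ψ` on `ℝⁿ` which is invariant under sign changes of the
coordinates is monotone on the positive quadrant. -/
theorem stmt_5 {n : ℕ} (Ψ : (Fin n → ℝ) → ℝ)
    (hdef : ∀ x : Fin n → ℝ, Ψ x = 0 ↔ x = 0)
    (hadd : ∀ x y : Fin n → ℝ, Ψ (x + y) ≤ Ψ x + Ψ y)
    (hsmul : ∀ (c : ℝ) (x : Fin n → ℝ), Ψ (c • x) = |c| * Ψ x)
    (habs : ∀ x : Fin n → ℝ, Ψ x = Ψ (fun i => |x i|)) :
    ∀ p q : Fin n → ℝ, 0 ≤ q → q ≤ p → Ψ q ≤ Ψ p := by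
  intro p q hq hqp
  -- Step lemma: lowering one nonnegative coordinate doesn't increase Ψ.
  have step : ∀ (x : Fin n → ℝ) (i : Fin n) (t : ℝ), 0 ≤ t → t ≤ x i →
      Ψ (Function.update x i t) ≤ Ψ x := by
    intro x i t ht htx
    rcases eq_or_lt_of_le (le_trans ht htx) with h0 | hpos
    · have ht0 : t = 0 := le_antisymm (htx.trans h0.symm.le) ht
      have : Function.update x i t = x := by
        funext j
        by_cases hj : j = i
        · subst hj; simp [ht0, ← h0]
        · simp [Function.update, hj]
      rw [this]
    · set a : ℝ := (x i + t) / (2 * x i) with ha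
      set b : ℝ := (x i - t) / (2 * x i) with hb
      have ha0 : 0 ≤ a := by positivity
      have hb0 : 0 ≤ b := by
        apply div_nonneg (by linarith) (by linarith)
      have hab : a + b = 1 := by
        rw [ha, hb, ← add_div, div_eq_one_iff_eq (by positivity)]
        ring
      set y : Fin n → ℝ := Function.update x i (-(x i)) with hy
      have hdecomp : Function.update x i t = a • x + b • y := by
        funext j
        by_cases hj : j = i
        · subst hj
          simp only [Function.update_self, Pi.add_apply, Pi.smul_apply, hy,
            Function.update_self, smul_eq_mul]
          rw [ha, hb, div_mul_eq_mul_div, div_mul_eq_mul_div, ← add_div, eq_div_iff (by positivity)]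
          ring
        · simp only [Function.update, hy, Pi.add_apply, Pi.smul_apply, smul_eq_mul]
          simp [hj]
          rw [← add_mul, hab, one_mul]
      have hyx : Ψ y = Ψ x := by
        rw [habs y, habs x]
        congr 1
        funext j
        by_cases hj : j = i
        · subst hj; simp [hy]
        · simp [hy, Function.update, hj]
      calc Ψ (Function.update x i t) = Ψ (a • x + b • y) := by rw [hdecomp]
        _ ≤ Ψ (a • x) + Ψ (b • y) := hadd _ _
        _ = a * Ψ x + b * Ψ y := by
            rw [hsmul, hsmul, abs_of_nonneg ha0, abs_of_nonneg hb0]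
        _ = (a + b) * Ψ x := by rw [hyx]; ring
        _ = Ψ x := by rw [hab, one_mul]
  -- Induction over the set of coordinates replaced by q.
  have main : ∀ s : Finset (Fin n), Ψ (fun i => if i ∈ s then q i else p i) ≤ Ψ p := by
    intro s
    induction s using Finset.induction_on with
    | empty => simp
    | @insert i s hi ih =>
        have hupd : (fun j => if j ∈ insert i s then q j else p j)
            = Function.update (fun j => if j ∈ s then q j else p j) i (q i) := by
          funext j
          by_cases hj : j = i
          · subst hj; simp [hi]
          · simp [Function.update, hj]
        rw [hupd]
        refine le_trans (step _ i (q i) (hq i) ?_) ih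
        simp [hi]
        exact hqp i
  have := main Finset.univ
  simpa using this
end

section
/- Let Φ : [0,∞)^n → [0,∞) satisfy conditions (1)–(4) (positivity, monotonicity, subadditivity, positive homogeneity), and let Ψ(x) = Φ(|x₁|,...,|xₙ|). Then Ψ is induced by an inner product on ℝ^n if and only if Φ²(λ₁e₁ + ... + λₙeₙ) = Φ²(λ₁e₁) + ... + Φ²(λₙeₙ) for all λᵢ > 0. In this case {e₁,...,eₙ} is an orthogonal system for that inner product. -/
open Finset Filter Topology

/-- For `Φ` satisfying (1)-(4), the norm `Ψ(x) = Φ(|x₁|,...,|xₙ|)`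
is induced by an inner product on `ℝⁿ` (for which the standard basis is an
orthogonal system) iff `Φ² (Σ λᵢ eᵢ) = Σ Φ²(λᵢ eᵢ)` for all `λᵢ > 0`. -/
theorem stmt_6 {n : ℕ} (Φ : (Fin n → ℝ) → ℝ)
    (hpos : ∀ q : Fin n → ℝ, 0 ≤ q → 0 ≤ Φ q)
    (hdef : ∀ q : Fin n → ℝ, 0 ≤ q → (Φ q = 0 ↔ q = 0))
    (hmono : ∀ p q : Fin n → ℝ, 0 ≤ q → q ≤ p → Φ q ≤ Φ p)
    (hsub : ∀ p q : Fin n → ℝ, 0 ≤ p → 0 ≤ q → Φ (p + q) ≤ Φ p + Φ q)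
    (hhom : ∀ (l : ℝ) (q : Fin n → ℝ), 0 ≤ l → 0 ≤ q → Φ (l • q) = l * Φ q) :
    (∃ B : (Fin n → ℝ) → (Fin n → ℝ) → ℝ,
        (∀ x y, B x y = B y x) ∧
        (∀ x y z, B (x + y) z = B x z + B y z) ∧
        (∀ (c : ℝ) x y, B (c • x) y = c * B x y) ∧
        (∀ x, x ≠ 0 → 0 < B x x) ∧
        (∀ x : Fin n → ℝ, Φ (fun i => |x i|) ^ 2 = B x x) ∧
        (∀ i j : Fin n, i ≠ j → B (Pi.single i 1) (Pi.single j 1) = 0))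
    ↔
    (∀ l : Fin n → ℝ, (∀ i, 0 < l i) →
        Φ l ^ 2 = ∑ i, Φ (Pi.single i (l i)) ^ 2) := by
  have hsingle_nonneg : ∀ (i : Fin n) (t : ℝ), 0 ≤ t →
      (0 : Fin n → ℝ) ≤ Pi.single i t := by
    intro i t ht j
    classical
    rcases eq_or_ne j i with rfl | hj
    · simpa using ht
    · simp [Pi.single_eq_of_ne hj]
  have hsingle_smul : ∀ (i : Fin n) (t : ℝ),
      Pi.single i t = t • (Pi.single i 1 : Fin n → ℝ) := by
    intro i t
    funext j
    classical
    rcases eq_or_ne j i with rfl | hj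
    · simp
    · simp [Pi.single_eq_of_ne hj]
  have habs_single : ∀ (i : Fin n) (t : ℝ), 0 ≤ t →
      (fun j => |(Pi.single i t : Fin n → ℝ) j|) = Pi.single i t := by
    intro i t ht
    funext j
    classical
    rcases eq_or_ne j i with rfl | hj
    · simp [abs_of_nonneg ht]
    · simp [Pi.single_eq_of_ne hj]
  constructor
  · rintro ⟨B, hsymm, hadd, hsmul, hposB, hnorm, horth⟩ l hl
    have hB0 : ∀ z, B 0 z = 0 := by
      intro z
      have h := hadd 0 0 z
      simp only [add_zero] at h
      linarith
    have hBsum : ∀ (y : Fin n → ℝ) (s : Finset (Fin n)) (f : Fin n → (Fin n → ℝ)),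
        B (∑ i ∈ s, f i) y = ∑ i ∈ s, B (f i) y := by
      intro y s f
      classical
      induction s using Finset.induction with
      | empty => simpa using hB0 y
      | insert _ _ hi ih => rw [Finset.sum_insert hi, hadd, ih, Finset.sum_insert hi]
    have hldecomp : l = ∑ i, Pi.single i (l i) := by
      funext j
      classical
      simp [Pi.single_apply]
    have habs_l : (fun i => |l i|) = l := by
      funext i; exact abs_of_pos (hl i)
    have hBll : B l l = ∑ i, l i * (l i * B (Pi.single i 1) (Pi.single i 1)) := by
      have h1 : B l l = ∑ i, l i * B (Pi.single i 1) l := by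
        calc B l l = B (∑ i, Pi.single i (l i)) l := by rw [← hldecomp]
          _ = ∑ i, B (Pi.single i (l i)) l := hBsum l _ _
          _ = ∑ i, l i * B (Pi.single i 1) l := by
              refine Finset.sum_congr rfl fun i _ => ?_
              rw [hsingle_smul i (l i), hsmul]
      rw [h1]
      refine Finset.sum_congr rfl fun i _ => ?_
      congr 1
      calc B (Pi.single i 1) l = B l (Pi.single i 1) := hsymm _ _
        _ = B (∑ j, Pi.single j (l j)) (Pi.single i 1) := by rw [← hldecomp]
        _ = ∑ j, B (Pi.single j (l j)) (Pi.single i 1) := hBsum _ _ _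
        _ = ∑ j, l j * B (Pi.single j 1) (Pi.single i 1) := by
              refine Finset.sum_congr rfl fun j _ => ?_
              rw [hsingle_smul j (l j), hsmul]
        _ = l i * B (Pi.single i 1) (Pi.single i 1) := by
              refine Finset.sum_eq_single i (fun j _ hj => ?_) (by simp)
              rw [horth j i hj, mul_zero]
    have hterm : ∀ i, Φ (Pi.single i (l i)) ^ 2
        = l i * (l i * B (Pi.single i 1) (Pi.single i 1)) := by
      intro i
      have h1 := hnorm (Pi.single i (l i))
      rw [habs_single i (l i) (hl i).le] at h1
      rw [h1, hsingle_smul i (l i), hsmul, hsymm, hsmul, hsymm]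
    calc Φ l ^ 2 = Φ (fun i => |l i|) ^ 2 := by rw [habs_l]
      _ = B l l := hnorm l
      _ = ∑ i, l i * (l i * B (Pi.single i 1) (Pi.single i 1)) := hBll
      _ = ∑ i, Φ (Pi.single i (l i)) ^ 2 := by
          exact Finset.sum_congr rfl fun i _ => (hterm i).symm
  · intro h
    classical
    set c : Fin n → ℝ := fun i => Φ (Pi.single i 1) ^ 2 with hc
    have hc_nonneg : ∀ i, 0 ≤ c i := fun i => sq_nonneg _
    have hc_pos : ∀ i, 0 < c i := by
      intro i
      have hne : Φ (Pi.single i 1) ≠ 0 := by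
        rw [Ne, hdef _ (hsingle_nonneg i 1 zero_le_one)]
        intro h0
        have := congrFun h0 i
        simp at this
      exact pow_pos (((hpos _ (hsingle_nonneg i 1 zero_le_one)).lt_of_ne (Ne.symm hne))) 2
    have hΦsingle : ∀ (i : Fin n) (t : ℝ), 0 ≤ t → Φ (Pi.single i t) ^ 2 = t ^ 2 * c i := by
      intro i t ht
      rw [hsingle_smul i t, hhom t _ ht (hsingle_nonneg i 1 zero_le_one), mul_pow, hc]
    have hpos_sum : ∀ l : Fin n → ℝ, (∀ i, 0 < l i) →
        Φ l ^ 2 = ∑ i, (l i) ^ 2 * c i := by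
      intro l hl
      rw [h l hl]
      exact Finset.sum_congr rfl fun i _ => hΦsingle i (l i) (hl i).le
    have hkey : ∀ l : Fin n → ℝ, 0 ≤ l → Φ l ^ 2 = ∑ i, (l i) ^ 2 * c i := by
      intro l hl
      set S := ∑ i, (l i) ^ 2 * c i with hS
      have hΦl0 : 0 ≤ Φ l := hpos l hl
      -- the perturbed vector
      have hlε_pos : ∀ ε : ℝ, 0 < ε → ∀ i, 0 < (l + ε • (fun _ => 1 : Fin n → ℝ)) i := by
        intro ε hε i
        simp only [Pi.add_apply, Pi.smul_apply, smul_eq_mul, mul_one]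
        exact add_pos_of_nonneg_of_pos (hl i) hε
    -- Φ(l+ε1)² = ∑ (l i + ε)² c i
      have hFval : ∀ ε : ℝ, 0 < ε →
          Φ (l + ε • (fun _ => 1 : Fin n → ℝ)) ^ 2 = ∑ i, (l i + ε) ^ 2 * c i := by
        intro ε hε
        rw [hpos_sum _ (hlε_pos ε hε)]
        refine Finset.sum_congr rfl fun i _ => ?_
        simp [mul_comm]
      have hFt : Tendsto (fun ε : ℝ => ∑ i, (l i + ε) ^ 2 * c i) (𝓝[>] 0) (𝓝 S) := by
        have hcont : Continuous (fun ε : ℝ => ∑ i, (l i + ε) ^ 2 * c i) := by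
          fun_prop
        have := hcont.tendsto 0
        simp only [add_zero] at this
        exact this.mono_left nhdsWithin_le_nhds
      have hGt : Tendsto (fun ε : ℝ => (Φ l + ε * Φ (fun _ => 1 : Fin n → ℝ)) ^ 2)
          (𝓝[>] 0) (𝓝 (Φ l ^ 2)) := by
        have hcont : Continuous (fun ε : ℝ => (Φ l + ε * Φ (fun _ => 1 : Fin n → ℝ)) ^ 2) := by
          fun_prop
        have := hcont.tendsto 0
        simp only [zero_mul, add_zero] at this
        exact this.mono_left nhdsWithin_le_nhds
      have hupper : Φ l ^ 2 ≤ S := by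
        refine ge_of_tendsto hFt ?_
        refine eventually_of_mem self_mem_nhdsWithin fun ε hε => ?_
        have hε : (0 : ℝ) < ε := hε
        rw [← hFval ε hε]
        have hle : l ≤ l + ε • (fun _ => 1 : Fin n → ℝ) := by
          intro i
          simp only [Pi.add_apply, Pi.smul_apply, smul_eq_mul, mul_one]
          linarith
        exact pow_le_pow_left₀ hΦl0 (hmono _ _ hl hle) 2
      have hlower : S ≤ Φ l ^ 2 := by
        refine ge_of_tendsto hGt ?_
        refine eventually_of_mem self_mem_nhdsWithin fun ε hε => ?_
        have hε : (0 : ℝ) < ε := hε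
        have h1 : S ≤ ∑ i, (l i + ε) ^ 2 * c i := by
          refine Finset.sum_le_sum fun i _ => ?_
          have hli : (0:ℝ) ≤ l i := hl i
          have : (l i) ^ 2 ≤ (l i + ε) ^ 2 := by nlinarith
          exact mul_le_mul_of_nonneg_right this (hc_nonneg i)
        have h2 : Φ (l + ε • (fun _ => 1 : Fin n → ℝ)) ≤ Φ l + ε * Φ (fun _ => 1) := by
          have hs := hsub l (ε • (fun _ => 1 : Fin n → ℝ)) hl
            (fun i => by simp [hε.le])
          rwa [hhom ε _ hε.le (fun i => zero_le_one)] at hs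
        have h3 : Φ (l + ε • (fun _ => 1 : Fin n → ℝ)) ^ 2
            ≤ (Φ l + ε * Φ (fun _ => 1 : Fin n → ℝ)) ^ 2 :=
          pow_le_pow_left₀ (hpos _ fun i => (hlε_pos ε hε i).le) h2 2
        calc S ≤ ∑ i, (l i + ε) ^ 2 * c i := h1
          _ = Φ (l + ε • (fun _ => 1 : Fin n → ℝ)) ^ 2 := (hFval ε hε).symm
          _ ≤ _ := h3
      exact le_antisymm hupper hlower
    refine ⟨fun x y => ∑ i, x i * y i * c i, ?_, ?_, ?_, ?_, ?_, ?_⟩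
    · intro x y
      exact Finset.sum_congr rfl fun i _ => by ring
    · intro x y z
      rw [← Finset.sum_add_distrib]
      refine Finset.sum_congr rfl fun i _ => ?_
      simp only [Pi.add_apply]
      ring
    · intro cc x y
      rw [Finset.mul_sum]
      refine Finset.sum_congr rfl fun i _ => ?_
      simp only [Pi.smul_apply, smul_eq_mul]
      ring
    · intro x hx
      obtain ⟨i, hi⟩ := Function.ne_iff.mp hx
      refine Finset.sum_pos' (fun j _ => ?_) ⟨i, Finset.mem_univ i, ?_⟩
      · exact mul_nonneg (mul_self_nonneg _) (hc_nonneg j)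
      · have : x i ≠ 0 := by simpa using hi
        exact mul_pos (mul_self_pos.mpr this) (hc_pos i)
    · intro x
      rw [hkey (fun i => |x i|) (fun i => abs_nonneg _)]
      refine Finset.sum_congr rfl fun i _ => ?_
      rw [sq_abs]
      ring
    · intro i j hij
      refine Finset.sum_eq_zero fun k _ => ?_
      rcases eq_or_ne k i with rfl | hk
      · rw [Pi.single_eq_of_ne hij]
        ring
      · rw [Pi.single_eq_of_ne hk]
        ring
end

section
/- Let Φ : [0,∞)^n → [0,∞) satisfy conditions (1)–(4) (in particular Φ is continuous, monotone, subadditive, positively homogeneous). Let (Xᵢ,dᵢ) be metric spaces and cᵢ : [0,1] → Xᵢ continuous curves parameterized proportionally to arclength with lengths lᵢ. Then the length of the product curve c = (c₁,...,cₙ) : [0,1] → (X₁ × ... × Xₙ, d_Φ) equals Φ(l₁,...,lₙ). -/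
/-- The set of partition sums of a curve `c : [0,1] → X` with respect to a
distance function `d`; its supremum is the length of the curve. -/
def partitionSums {X : Type*} (d : X → X → ℝ) (c : ℝ → X) : Set ℝ :=
  { s | ∃ (k : ℕ) (t : Fin (k + 1) → ℝ), Monotone t ∧ t 0 = 0 ∧ t (Fin.last k) = 1 ∧
      s = ∑ j : Fin k, d (c (t (Fin.castSucc j))) (c (t j.succ)) }


open List

def sumD (d : ℝ → ℝ → ℝ) : ℝ → List ℝ → ℝ
  | _, [] => 0
  | a, b :: p => d a b + sumD d b p

def isPart (r : List ℝ) : Prop :=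
  Chain' (· ≤ ·) (0 :: r) ∧ 1 ∈ r ∧ ∀ x ∈ r, x ≤ 1

section sumDlem
variable {d : ℝ → ℝ → ℝ} (hd0 : ∀ x y, 0 ≤ d x y)
  (hdt : ∀ x y z, d x z ≤ d x y + d y z)
include hd0

lemma sumD_nonneg (a : ℝ) (p : List ℝ) : 0 ≤ sumD d a p := by
  induction p generalizing a with
  | nil => exact le_refl 0
  | cons b p ih => exact add_nonneg (hd0 _ _) (ih b)

include hdt

lemma sumD_le_cons (a y : ℝ) (p : List ℝ) : sumD d a p ≤ d a y + sumD d y p := by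
  cases p with
  | nil => simpa [sumD] using hd0 a y
  | cons z p => simpa [sumD, add_assoc] using add_le_add_left (hdt a y z) (sumD d z p)

lemma sumD_sublist {p q : List ℝ} (h : p <+ q) (a : ℝ) : sumD d a p ≤ sumD d a q := by
  induction h generalizing a with
  | slnil => exact le_refl _
  | cons y h ih => exact (ih a).trans (sumD_le_cons hd0 hdt a y _)
  | cons_cons x h ih => exact add_le_add_right (ih x) _

end sumDlem

lemma sumFin_eq_sumD (d : ℝ → ℝ → ℝ) : ∀ {k : ℕ} (f : Fin (k + 1) → ℝ),
    (∑ j : Fin k, d (f (Fin.castSucc j)) (f j.succ)) = sumD d (f 0) (List.ofFn (f ∘ Fin.succ)) := by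
  intro k
  induction k with
  | zero => intro f; simp [sumD]
  | succ k ih =>
    intro f
    have h1 : (List.ofFn (f ∘ Fin.succ)) = f 1 :: List.ofFn ((f ∘ Fin.succ) ∘ Fin.succ) := by
      rw [List.ofFn_succ]; rfl
    have h2 : ∑ j : Fin k, d (f (Fin.castSucc j.succ)) (f j.succ.succ)
        = sumD d (f 1) (List.ofFn ((f ∘ Fin.succ) ∘ Fin.succ)) := by
      have h := ih (f ∘ Fin.succ)
      simp only [Function.comp_apply, Fin.succ_zero_eq_one] at h ⊢
      rw [← h]
      apply Finset.sum_congr rfl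
      intro j _
      rw [← Fin.succ_castSucc]
    rw [Fin.sum_univ_succ, h1]
    simp only [sumD]
    rw [h2]
    norm_num

lemma tele {k : ℕ} (t : Fin (k + 1) → ℝ) :
    ∑ j : Fin k, (t j.succ - t (Fin.castSucc j)) = t (Fin.last k) - t 0 := by
  induction k with
  | zero => simp
  | succ k ih =>
    rw [Fin.sum_univ_castSucc]
    have h := ih (t ∘ Fin.castSucc)
    simp only [Function.comp_apply, Fin.castSucc_zero] at h
    have h3 : ∑ j : Fin k, (t (Fin.castSucc j).succ - t (Fin.castSucc j).castSucc)
        = t (Fin.castSucc (Fin.last k)) - t 0 := by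
      rw [← h]; apply Finset.sum_congr rfl; intro j _; rw [Fin.succ_castSucc]
    rw [h3, show ((Fin.last k).succ) = Fin.last (k+1) from Fin.succ_last k]
    ring

lemma le_getLast_chain : ∀ (r : List ℝ), Chain' (· ≤ ·) r → ∀ x ∈ r, ∀ h : r ≠ [], x ≤ r.getLast h := by
  intro r
  induction r with
  | nil => intro _ x hx; simp at hx
  | cons a r ih =>
    intro hc x hx h
    cases r with
    | nil => simp at hx; simp [hx]
    | cons b r' =>
      rw [List.getLast_cons (by simp : (b::r') ≠ [])]
      have hc' : Chain' (· ≤ ·) (b :: r') := hc.tail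
      have hab : a ≤ b := (List.isChain_cons_cons.mp hc).1
      rcases List.mem_cons.mp hx with rfl | hx'
      · exact hab.trans (ih hc' b (by simp) (by simp))
      · exact ih hc' x hx' (by simp)

lemma chain'_ofFn_monotone {k : ℕ} (f : Fin k → ℝ) (hf : Monotone f) :
    Chain' (· ≤ ·) (List.ofFn f) := by
  change List.IsChain _ _; rw [List.isChain_iff_getElem]
  intro i hi
  rw [List.getElem_ofFn, List.getElem_ofFn]
  apply hf
  simp [Fin.le_def]

lemma exists_list_of_mem {X : Type*} (d : X → X → ℝ) (c : ℝ → X) {s : ℝ}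
    (hs : s ∈ partitionSums d c) :
    ∃ r : List ℝ, isPart r ∧ s = sumD (fun x y => d (c x) (c y)) 0 r := by
  obtain ⟨k, t, hm, h0, h1, rfl⟩ := hs
  cases k with
  | zero =>
    rw [show Fin.last 0 = 0 from rfl, h0] at h1
    exact absurd h1 (by norm_num)
  | succ k =>
    refine ⟨List.ofFn (t ∘ Fin.succ), ⟨?_, ?_, ?_⟩, ?_⟩
    · have hofn : (0:ℝ) :: List.ofFn (t ∘ Fin.succ) = List.ofFn t := by
        have h := List.ofFn_succ (f := t)
        rw [h0] at h
        exact h.symm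
      rw [hofn]
      exact chain'_ofFn_monotone t hm
    · rw [List.mem_ofFn]
      refine ⟨Fin.last k, ?_⟩
      show t (Fin.last k).succ = 1
      rw [Fin.succ_last]
      exact h1
    · intro x hx
      rw [List.mem_ofFn] at hx
      obtain ⟨j, rfl⟩ := hx
      exact (hm (Fin.le_last _)).trans_eq h1
    · rw [← h0]
      exact sumFin_eq_sumD (fun x y => d (c x) (c y)) t

lemma isPart_spec (r : List ℝ) (h : isPart r) :
    ∃ (k : ℕ) (t : Fin (k + 1) → ℝ), Monotone t ∧ t 0 = 0 ∧ t (Fin.last k) = 1 ∧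
      ∀ e : ℝ → ℝ → ℝ, (∑ j : Fin k, e (t (Fin.castSucc j)) (t j.succ)) = sumD e 0 r := by
  obtain ⟨hc, h1m, hle⟩ := h
  have hne : r ≠ [] := List.ne_nil_of_mem h1m
  have hlen : r.length + 1 = (0 :: r).length := by simp
  set t : Fin (r.length + 1) → ℝ := fun j => (0 :: r).get (Fin.cast hlen j) with ht
  have hp : List.Pairwise (· ≤ ·) (0 :: r) := List.isChain_iff_pairwise.mp hc
  have hg := List.pairwise_iff_get.mp hp
  have hlast : r.getLast hne = 1 := by
    refine le_antisymm (hle _ (List.getLast_mem hne)) ?_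
    exact le_getLast_chain r hc.tail 1 h1m hne
  refine ⟨r.length, t, ?_, ?_, ?_, ?_⟩
  · intro a b hab
    rcases lt_or_eq_of_le hab with hlt | rfl
    · exact hg _ _ hlt
    · exact le_refl _
  · rfl
  · show (0 :: r).get (Fin.cast hlen (Fin.last r.length)) = 1
    have hh : (0 :: r).get (Fin.cast hlen (Fin.last r.length)) = (0 :: r).getLast (by simp) := by
      have hidx : Fin.cast hlen (Fin.last r.length) = (⟨(0 :: r).length - 1, by simp⟩ : Fin (0 :: r).length) := by
        ext
        simp
      rw [hidx, List.getLast_eq_getElem, List.get_eq_getElem]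
    rw [hh, List.getLast_cons hne, hlast]
  · intro e
    have hofn : List.ofFn (t ∘ Fin.succ) = r := by
      apply List.ext_get (by simp)
      intro i h1i h2i
      rw [List.get_ofFn]
      show (0 :: r)[i+1]'(by simp [Nat.add_lt_add_right h2i]) = r.get ⟨i, h2i⟩
      rw [List.getElem_cons_succ]
      rfl
    rw [sumFin_eq_sumD e t, hofn]
    rfl

/-- Lemma 5: If `Φ` satisfies (1)-(4) and `cᵢ : [0,1] → Xᵢ` are
curves parameterized proportionally to arclength with lengths `lᵢ`, then the
`d_Φ`-length of the product curve equals `Φ(l₁,...,lₙ)`. -/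
theorem stmt_9 {n : ℕ} (Φ : (Fin n → ℝ) → ℝ)
    (hpos : ∀ q : Fin n → ℝ, 0 ≤ q → 0 ≤ Φ q)
    (hdef : ∀ q : Fin n → ℝ, 0 ≤ q → (Φ q = 0 ↔ q = 0))
    (hmono : ∀ p q : Fin n → ℝ, 0 ≤ q → q ≤ p → Φ q ≤ Φ p)
    (hsub : ∀ p q : Fin n → ℝ, 0 ≤ p → 0 ≤ q → Φ (p + q) ≤ Φ p + Φ q)
    (hhom : ∀ (l : ℝ) (q : Fin n → ℝ), 0 ≤ l → 0 ≤ q → Φ (l • q) = l * Φ q)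
    (X : Fin n → Type*) [∀ i, MetricSpace (X i)]
    (c : ∀ i, ℝ → X i) (l : Fin n → ℝ)
    (hlip : ∀ i, ∀ s ∈ Set.Icc (0 : ℝ) 1, ∀ t ∈ Set.Icc (0 : ℝ) 1,
      dist (c i s) (c i t) ≤ l i * |s - t|)
    (hlen : ∀ i, IsLUB (partitionSums dist (c i)) (l i)) :
    IsLUB (partitionSums (fun x y : ∀ i, X i => Φ (fun i => dist (x i) (y i)))
      (fun t i => c i t)) (Φ l) := by
  classical
  have hmem01 : ∀ i, dist (c i 0) (c i 1) ∈ partitionSums dist (c i) := by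
    intro i
    refine ⟨1, fun j => (j : ℕ), ?_, ?_, ?_, ?_⟩
    · intro a b hab
      exact_mod_cast Nat.cast_le.mpr hab
    · simp
    · simp [Fin.last]
    · simp
  have hl0 : ∀ i, 0 ≤ l i := fun i => dist_nonneg.trans ((hlen i).1 (hmem01 i))
  have hl0' : (0 : Fin n → ℝ) ≤ l := fun i => hl0 i
  have hΦ10 : 0 ≤ Φ (fun _ => 1) := hpos _ (fun i => by norm_num)
  constructor
  · -- upper bound
    rintro s ⟨k, t, hmt, ht0, ht1, rfl⟩
    show (∑ j : Fin k, Φ (fun i => dist (c i (t (Fin.castSucc j))) (c i (t j.succ)))) ≤ Φ l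
    have hIcc : ∀ j : Fin (k+1), t j ∈ Set.Icc (0:ℝ) 1 := fun j =>
      ⟨le_of_eq_of_le ht0.symm (hmt (Fin.zero_le _)), le_of_le_of_eq (hmt (Fin.le_last _)) ht1⟩
    have hterm : ∀ j : Fin k, Φ (fun i => dist (c i (t (Fin.castSucc j))) (c i (t j.succ)))
        ≤ (t j.succ - t (Fin.castSucc j)) * Φ l := by
      intro j
      have hΔ0 : 0 ≤ t j.succ - t (Fin.castSucc j) :=
        sub_nonneg.mpr (hmt (Fin.castSucc_le_succ j))
      have hq : ∀ i, dist (c i (t (Fin.castSucc j))) (c i (t j.succ))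
          ≤ (t j.succ - t (Fin.castSucc j)) * l i := by
        intro i
        have h := hlip i _ (hIcc (Fin.castSucc j)) _ (hIcc j.succ)
        have habs : |t (Fin.castSucc j) - t j.succ| = t j.succ - t (Fin.castSucc j) := by
          rw [abs_sub_comm, abs_of_nonneg hΔ0]
        rw [habs] at h
        linarith
      calc Φ (fun i => dist (c i (t (Fin.castSucc j))) (c i (t j.succ)))
          ≤ Φ ((t j.succ - t (Fin.castSucc j)) • l) := by
            apply hmono _ _ (fun i => dist_nonneg)
            intro i
            simpa [smul_eq_mul] using hq i
        _ = (t j.succ - t (Fin.castSucc j)) * Φ l := hhom _ _ hΔ0 hl0'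
    calc (∑ j : Fin k, Φ (fun i => dist (c i (t (Fin.castSucc j))) (c i (t j.succ))))
        ≤ ∑ j : Fin k, (t j.succ - t (Fin.castSucc j)) * Φ l :=
          Finset.sum_le_sum (fun j _ => hterm j)
      _ = (t (Fin.last k) - t 0) * Φ l := by rw [← Finset.sum_mul, tele]
      _ = Φ l := by rw [ht0, ht1]; ring
  · -- lower bound
    rintro b hb
    refine le_of_forall_pos_le_add ?_
    intro ε hε
    have hden : (0:ℝ) < (n : ℝ) * Φ (fun _ => 1) + 1 :=
      add_pos_of_nonneg_of_pos (mul_nonneg (Nat.cast_nonneg n) hΦ10) one_pos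
    set ε' := ε / ((n : ℝ) * Φ (fun _ => 1) + 1) with hε'def
    have hε'pos : 0 < ε' := div_pos hε hden
    have hex : ∀ i, ∃ r : List ℝ, isPart r ∧
        l i - ε' < sumD (fun x y => dist (c i x) (c i y)) 0 r := by
      intro i
      obtain ⟨s, hsmem, hs1, _⟩ := (hlen i).exists_between
        (show l i - ε' < l i by linarith)
      obtain ⟨r, hrp, rfl⟩ := exists_list_of_mem dist (c i) hsmem
      exact ⟨r, hrp, hs1⟩
    choose r hr hrs using hex
    set m := List.insertionSort (· ≤ ·) (1 :: (List.ofFn r).flatten) with hmdef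
    have hm_sorted : List.Pairwise (· ≤ ·) m := List.pairwise_insertionSort _ _
    have hm_perm : m ~ 1 :: (List.ofFn r).flatten := List.perm_insertionSort _ _
    have hmemm : ∀ x ∈ m, x = 1 ∨ ∃ i, x ∈ r i := by
      intro x hx
      rw [hm_perm.mem_iff, List.mem_cons] at hx
      rcases hx with rfl | hx
      · exact Or.inl rfl
      · rw [List.mem_flatten] at hx
        obtain ⟨lst, hlst, hxl⟩ := hx
        rw [List.mem_ofFn] at hlst
        obtain ⟨i, rfl⟩ := hlst
        exact Or.inr ⟨i, hxl⟩
    have hr0 : ∀ i, ∀ x ∈ r i, (0:ℝ) ≤ x := by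
      intro i x hx
      have hpw := List.isChain_iff_pairwise.mp (hr i).1
      exact (List.pairwise_cons.mp hpw).1 x hx
    have hmPart : isPart m := by
      refine ⟨?_, ?_, ?_⟩
      · change List.IsChain _ _; rw [List.isChain_iff_pairwise, List.pairwise_cons]
        refine ⟨fun x hx => ?_, hm_sorted⟩
        rcases hmemm x hx with rfl | ⟨i, hxi⟩
        · norm_num
        · exact hr0 i x hxi
      · rw [hm_perm.mem_iff]; exact List.mem_cons_self
      · intro x hx
        rcases hmemm x hx with rfl | ⟨i, hxi⟩
        · exact le_refl _
        · exact (hr i).2.2 x hxi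
    have hsub_i : ∀ i, r i <+ m := by
      intro i
      apply List.sublist_of_subperm_of_pairwise ?_ ?_ hm_sorted
      · have h1 : r i <+ (List.ofFn r).flatten :=
          List.sublist_flatten_of_mem (by rw [List.mem_ofFn]; exact ⟨i, rfl⟩)
        have h2 : r i <+ 1 :: (List.ofFn r).flatten := h1.trans (List.sublist_cons_self _ _)
        exact h2.subperm.trans hm_perm.symm.subperm
      · have hpw := List.isChain_iff_pairwise.mp (hr i).1
        exact (List.pairwise_cons.mp hpw).2
    obtain ⟨k, t, hmt, ht0, ht1, hsum⟩ := isPart_spec m hmPart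
    have hIcc : ∀ j : Fin (k+1), t j ∈ Set.Icc (0:ℝ) 1 := fun j =>
      ⟨le_of_eq_of_le ht0.symm (hmt (Fin.zero_le _)), le_of_le_of_eq (hmt (Fin.le_last _)) ht1⟩
    have hΔ0 : ∀ j : Fin k, 0 ≤ t j.succ - t (Fin.castSucc j) :=
      fun j => sub_nonneg.mpr (hmt (Fin.castSucc_le_succ j))
    have hqΔ : ∀ (j : Fin k) (i : Fin n), dist (c i (t (Fin.castSucc j))) (c i (t j.succ))
        ≤ (t j.succ - t (Fin.castSucc j)) * l i := by
      intro j i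
      have h := hlip i _ (hIcc (Fin.castSucc j)) _ (hIcc j.succ)
      have habs : |t (Fin.castSucc j) - t j.succ| = t j.succ - t (Fin.castSucc j) := by
        rw [abs_sub_comm, abs_of_nonneg (hΔ0 j)]
      rw [habs] at h
      linarith
    have hsumΔ : ∑ j : Fin k, (t j.succ - t (Fin.castSucc j)) = 1 := by
      rw [tele, ht0, ht1]; ring
    have hSi : ∀ i, l i - ε' < ∑ j : Fin k, dist (c i (t (Fin.castSucc j))) (c i (t j.succ)) := by
      intro i
      calc l i - ε' < sumD (fun x y => dist (c i x) (c i y)) 0 (r i) := hrs i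
        _ ≤ sumD (fun x y => dist (c i x) (c i y)) 0 m :=
            sumD_sublist (d := fun x y => dist (c i x) (c i y)) (fun _ _ => dist_nonneg)
              (fun _ _ _ => dist_triangle _ _ _) (hsub_i i) 0
        _ = ∑ j : Fin k, dist (c i (t (Fin.castSucc j))) (c i (t j.succ)) :=
            (hsum (fun x y => dist (c i x) (c i y))).symm
    have hprod : (∑ j : Fin k, Φ (fun i => dist (c i (t (Fin.castSucc j))) (c i (t j.succ)))) ≤ b := by
      apply hb
      exact ⟨k, t, hmt, ht0, ht1, rfl⟩
    have hterm : ∀ j : Fin k, (t j.succ - t (Fin.castSucc j)) * Φ l ≤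
        Φ (fun i => dist (c i (t (Fin.castSucc j))) (c i (t j.succ)))
        + (∑ i : Fin n, ((t j.succ - t (Fin.castSucc j)) * l i
            - dist (c i (t (Fin.castSucc j))) (c i (t j.succ)))) * Φ (fun _ => 1) := by
      intro j
      set q : Fin n → ℝ := fun i => dist (c i (t (Fin.castSucc j))) (c i (t j.succ)) with hqdef
      set p : Fin n → ℝ := fun i => (t j.succ - t (Fin.castSucc j)) * l i - q i with hpdef
      have hq0 : (0 : Fin n → ℝ) ≤ q := fun i => dist_nonneg
      have hp0 : (0 : Fin n → ℝ) ≤ p := fun i => sub_nonneg.mpr (hqΔ j i)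
      have h1 : Φ ((t j.succ - t (Fin.castSucc j)) • l) ≤ Φ q + Φ p := by
        have h := hsub q p hq0 hp0
        have heq : q + p = (t j.succ - t (Fin.castSucc j)) • l := by
          funext i
          simp [hpdef, smul_eq_mul]
        rw [heq] at h
        exact h
      have h2 : Φ p ≤ (∑ i : Fin n, p i) * Φ (fun _ => 1) := by
        have hsum0 : 0 ≤ ∑ i : Fin n, p i := Finset.sum_nonneg (fun i _ => hp0 i)
        calc Φ p ≤ Φ ((∑ i : Fin n, p i) • (fun _ => (1:ℝ))) := by
              apply hmono _ _ hp0
              intro i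
              simpa [smul_eq_mul] using
                Finset.single_le_sum (fun i _ => hp0 i) (Finset.mem_univ i)
          _ = (∑ i : Fin n, p i) * Φ (fun _ => 1) :=
              hhom _ _ hsum0 (fun i => by norm_num)
      have h3 : (t j.succ - t (Fin.castSucc j)) * Φ l
          = Φ ((t j.succ - t (Fin.castSucc j)) • l) := (hhom _ _ (hΔ0 j) hl0').symm
      rw [h3]
      calc Φ ((t j.succ - t (Fin.castSucc j)) • l) ≤ Φ q + Φ p := h1
        _ ≤ Φ q + (∑ i : Fin n, p i) * Φ (fun _ => 1) := by linarith
    have hdefect : (∑ j : Fin k, ∑ i : Fin n, ((t j.succ - t (Fin.castSucc j)) * l i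
        - dist (c i (t (Fin.castSucc j))) (c i (t j.succ)))) ≤ (n : ℝ) * ε' := by
      rw [Finset.sum_comm]
      have hi : ∀ i : Fin n, (∑ j : Fin k, ((t j.succ - t (Fin.castSucc j)) * l i
          - dist (c i (t (Fin.castSucc j))) (c i (t j.succ)))) ≤ ε' := by
        intro i
        have h1 : ∑ j : Fin k, (t j.succ - t (Fin.castSucc j)) * l i = l i := by
          rw [← Finset.sum_mul, hsumΔ, one_mul]
        have h2 := hSi i
        rw [Finset.sum_sub_distrib, h1]
        linarith
      calc (∑ i : Fin n, ∑ j : Fin k, ((t j.succ - t (Fin.castSucc j)) * l i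
          - dist (c i (t (Fin.castSucc j))) (c i (t j.succ))))
          ≤ ∑ _i : Fin n, ε' := Finset.sum_le_sum (fun i _ => hi i)
        _ = (n : ℝ) * ε' := by simp [mul_comm]
    have hΦl_le : Φ l ≤ (∑ j : Fin k, Φ (fun i => dist (c i (t (Fin.castSucc j))) (c i (t j.succ))))
        + (∑ j : Fin k, ∑ i : Fin n, ((t j.succ - t (Fin.castSucc j)) * l i
            - dist (c i (t (Fin.castSucc j))) (c i (t j.succ)))) * Φ (fun _ => 1) := by
      calc Φ l = (∑ j : Fin k, (t j.succ - t (Fin.castSucc j))) * Φ l := by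
            rw [hsumΔ, one_mul]
        _ = ∑ j : Fin k, (t j.succ - t (Fin.castSucc j)) * Φ l := by rw [Finset.sum_mul]
        _ ≤ ∑ j : Fin k, (Φ (fun i => dist (c i (t (Fin.castSucc j))) (c i (t j.succ)))
              + (∑ i : Fin n, ((t j.succ - t (Fin.castSucc j)) * l i
                  - dist (c i (t (Fin.castSucc j))) (c i (t j.succ)))) * Φ (fun _ => 1)) :=
            Finset.sum_le_sum (fun j _ => hterm j)
        _ = _ := by rw [Finset.sum_add_distrib, Finset.sum_mul]
    have hlast : ((n : ℝ) * ε') * Φ (fun _ => 1) ≤ ε := by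
      have hA : 0 ≤ (n : ℝ) * Φ (fun _ => 1) := mul_nonneg (Nat.cast_nonneg n) hΦ10
      have heq : ((n : ℝ) * ε') * Φ (fun _ => 1)
          = (((n : ℝ) * Φ (fun _ => 1)) / ((n : ℝ) * Φ (fun _ => 1) + 1)) * ε := by
        rw [hε'def]; field_simp
      rw [heq]
      have hAD : ((n : ℝ) * Φ (fun _ => 1)) / ((n : ℝ) * Φ (fun _ => 1) + 1) ≤ 1 :=
        (div_le_one hden).mpr (by linarith)
      calc (((n : ℝ) * Φ (fun _ => 1)) / ((n : ℝ) * Φ (fun _ => 1) + 1)) * ε ≤ 1 * ε :=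
            mul_le_mul_of_nonneg_right hAD hε.le
        _ = ε := one_mul ε
    have hmul := mul_le_mul_of_nonneg_right hdefect hΦ10
    linarith
end

section
/- Let Φ : [0,∞)^n → [0,∞) be induced by a norm Ψ on ℝ^n (i.e. Ψ(x) = Φ(|x₁|,...,|xₙ|) is a norm). If (Xᵢ,dᵢ), i = 1,...,n, are length (inner metric) spaces, then (X₁ × ... × Xₙ, d_Φ) is a length space. -/
/-- `(X, d)` is a length (inner metric) space: any two points can be joined by
continuous curves of length arbitrarily close to their distance. -/
def IsLengthSpaceWith {X : Type*} (d : X → X → ℝ) : Prop :=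
  ∀ x y : X, ∀ ε > (0 : ℝ), ∃ c : ℝ → X, c 0 = x ∧ c 1 = y ∧
    (∀ t : ℝ, ∀ ε' > (0 : ℝ), ∃ δ > (0 : ℝ), ∀ s : ℝ, |s - t| < δ → d (c s) (c t) < ε') ∧
    (∀ S ∈ partitionSums d c, S ≤ d x y + ε)

open Set in
lemma stmt10_evar_le {X : Type*} [MetricSpace X] {c : ℝ → X} {B : ℝ}
    (hB : ∀ S ∈ partitionSums (fun a b : X => dist a b) c, S ≤ B) :
    eVariationOn c (Set.Icc 0 1) ≤ ENNReal.ofReal B := by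
  refine iSup_le ?_
  rintro ⟨m, u, hu, us⟩
  dsimp only
  set T : ℕ → ℝ := fun j => if j = 0 then 0 else if m + 2 ≤ j then 1 else u (j - 1) with hT
  have hT0 : T 0 = 0 := by simp [hT]
  have hTlast : T (m + 2) = 1 := by simp [hT]
  have hTmid : ∀ j, 1 ≤ j → j ≤ m + 1 → T j = u (j - 1) := by
    intro j h1 h2
    simp only [hT]
    rw [if_neg (by omega), if_neg (by omega)]
  have hTmono : Monotone T := by
    intro a b hab
    rcases eq_or_lt_of_le hab with rfl | hab'
    · exact le_rfl
    by_cases ha : a = 0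
    · subst ha; rw [hT0]
      by_cases hb2 : m + 2 ≤ b
      · simp only [hT]; rw [if_neg (by omega), if_pos hb2]; exact zero_le_one
      · rw [hTmid b (by omega) (by omega)]; exact (us _).1
    by_cases hb2 : m + 2 ≤ b
    · have hTb : T b = 1 := by simp only [hT]; rw [if_neg (by omega), if_pos hb2]
      rw [hTb]
      by_cases ha2 : m + 2 ≤ a
      · have : T a = 1 := by simp only [hT]; rw [if_neg ha, if_pos ha2]
        rw [this]
      · rw [hTmid a (by omega) (by omega)]; exact (us _).2
    · rw [hTmid a (by omega) (by omega), hTmid b (by omega) (by omega)]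
      exact hu (by omega)
  have hSmem : (∑ j ∈ Finset.range (m + 2), dist (c (T j)) (c (T (j + 1)))) ∈
      partitionSums (fun a b : X => dist a b) c := by
    refine ⟨m + 2, fun j : Fin (m + 3) => T j.val, ?_, ?_, ?_, ?_⟩
    · exact fun a b hab => hTmono hab
    · exact hT0
    · exact hTlast
    · rw [← Fin.sum_univ_eq_sum_range (fun j => dist (c (T j)) (c (T (j + 1)))) (m + 2)]
      exact Finset.sum_congr rfl fun j _ => by
        simp only [Fin.coe_castSucc, Fin.val_succ]
  have hS := hB _ hSmem
  have hle : (∑ i ∈ Finset.range m, dist (c (u (i + 1))) (c (u i))) ≤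
      ∑ j ∈ Finset.range (m + 2), dist (c (T j)) (c (T (j + 1))) := by
    rw [Finset.sum_range_succ, Finset.sum_range_succ']
    have : ∀ i ∈ Finset.range m, dist (c (u (i + 1))) (c (u i)) =
        dist (c (T (i + 1))) (c (T (i + 1 + 1))) := by
      intro i hi
      rw [Finset.mem_range] at hi
      rw [hTmid (i + 1) (by omega) (by omega), hTmid (i + 2) (by omega) (by omega)]
      simp only [Nat.add_sub_cancel]
      rw [dist_comm]
      norm_num
    rw [Finset.sum_congr rfl this]
    have h1 : (0:ℝ) ≤ dist (c (T 0)) (c (T 1)) := dist_nonneg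
    have h2 : (0:ℝ) ≤ dist (c (T (m + 1))) (c (T (m + 1 + 1))) := dist_nonneg
    linarith
  calc ∑ i ∈ Finset.range m, edist (c (u (i + 1))) (c (u i))
      = ENNReal.ofReal (∑ i ∈ Finset.range m, dist (c (u (i + 1))) (c (u i))) := by
        rw [ENNReal.ofReal_sum_of_nonneg (fun i _ => dist_nonneg)]
        simp [edist_dist]
    _ ≤ ENNReal.ofReal B := ENNReal.ofReal_le_ofReal (le_trans hle hS)


open Set in
lemma stmt10_right_small {X : Type*} [MetricSpace X] {c : ℝ → X}
    (hc : ∀ t : ℝ, ∀ ε' > (0:ℝ), ∃ δ > (0:ℝ), ∀ s : ℝ, |s - t| < δ → dist (c s) (c t) < ε')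
    (hfin : eVariationOn c (Set.Icc 0 1) ≠ ⊤)
    {t : ℝ} (ht : t ∈ Set.Icc (0:ℝ) 1) {η : ℝ} (hη : 0 < η) :
    ∃ δ > (0:ℝ), ∀ s, t ≤ s → s ≤ 1 → s - t < δ →
      eVariationOn c (Set.Icc t s) ≤ ENNReal.ofReal (2 * η) := by
  classical
  obtain ⟨δ₀, hδ₀, hδ₀d⟩ := hc t η hη
  have hmono2η : ENNReal.ofReal η ≤ ENNReal.ofReal (2 * η) :=
    ENNReal.ofReal_le_ofReal (by linarith)
  have hfin1 : eVariationOn c (Set.Icc t 1) ≠ ⊤ :=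
    fun h => hfin (top_le_iff.1 (h ▸ eVariationOn.mono c (Set.Icc_subset_Icc_left ht.1)))
  by_cases hsmall : eVariationOn c (Set.Icc t 1) ≤ ENNReal.ofReal η
  · refine ⟨δ₀, hδ₀, fun s hts hs1 _ => ?_⟩
    exact le_trans (le_trans (eVariationOn.mono c (Set.Icc_subset_Icc_right hs1)) hsmall) hmono2η
  push_neg at hsmall
  -- get a near-optimal partition of Icc t 1
  have hlt : eVariationOn c (Set.Icc t 1) - ENNReal.ofReal η < eVariationOn c (Set.Icc t 1) :=
    ENNReal.sub_lt_self hfin1 (fun h => by simp [h] at hsmall)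
      (ne_of_gt (ENNReal.ofReal_pos.2 hη))
  rw [eVariationOn] at hlt
  obtain ⟨⟨m, u, hu, us⟩, hp⟩ := lt_iSup_iff.1 hlt
  have hEsum : eVariationOn c (Set.Icc t 1) ≤
      (∑ i ∈ Finset.range m, edist (c (u (i + 1))) (c (u i))) + ENNReal.ofReal η := by
    have := tsub_add_cancel_of_le hsmall.le
    calc eVariationOn c (Set.Icc t 1)
        = eVariationOn c (Set.Icc t 1) - ENNReal.ofReal η + ENNReal.ofReal η := this.symm
      _ ≤ _ := add_le_add_left hp.le _
  by_cases hA : ∃ j, j ≤ m ∧ t < u j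
  · set j₀ := Nat.find hA with hj₀
    obtain ⟨hj₀m, hj₀t⟩ := Nat.find_spec hA
    refine ⟨min δ₀ (u j₀ - t), lt_min hδ₀ (by linarith), fun s hts hs1 hsδ => ?_⟩
    rcases eq_or_lt_of_le hts with rfl | hts'
    · have hss : (Set.Icc t t).Subsingleton := by
        rw [Set.Icc_self]; exact Set.subsingleton_singleton
      rw [eVariationOn.subsingleton c hss]
      exact zero_le
    have hsu : ∀ j, u j = t ∨ s ≤ u j := by
      intro j
      rcases le_or_gt (u j) t with h | h
      · exact Or.inl (le_antisymm h (us j).1)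
      · right
        have hj : j₀ ≤ j := by
          by_contra hlt'
          push_neg at hlt'
          exact Nat.find_min hA hlt' ⟨by omega, h⟩
        have := hu hj
        have h2 : s - t < u j₀ - t := lt_of_lt_of_le hsδ (min_le_right _ _)
        linarith
    set w : ℕ → ℝ := fun j => max (u j) s with hw
    have hwmono : Monotone w := fun a b hab => max_le_max (hu hab) le_rfl
    have hwmem : ∀ j, w j ∈ Set.Icc s 1 := fun j => ⟨le_max_right _ _, max_le (us j).2 hs1⟩
    have hest : edist (c s) (c t) ≤ ENNReal.ofReal η := by
      rw [edist_dist]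
      refine ENNReal.ofReal_le_ofReal (le_of_lt (hδ₀d s ?_))
      rw [abs_sub_lt_iff]
      exact ⟨lt_of_lt_of_le hsδ (min_le_left _ _), by linarith⟩
    set P : ℕ → Prop := fun i => u i = t ∧ t < u (i + 1) with hP
    have hterm : ∀ i, edist (c (u (i + 1))) (c (u i)) ≤
        edist (c (w (i + 1))) (c (w i)) + (if P i then ENNReal.ofReal η else 0) := by
      intro i
      rcases hsu (i + 1) with h1 | h1
      · -- u (i+1) = t, hence u i = t
        have h2 : u i = t := le_antisymm (h1 ▸ hu (Nat.le_succ i)) (us i).1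
        have hz : edist (c (u (i + 1))) (c (u i)) = 0 := by rw [h1, h2, edist_self]
        exact hz.le.trans (zero_le)
      · have hw1 : w (i + 1) = u (i + 1) := max_eq_left h1
        rcases hsu i with h2 | h2
        · -- transition term
          have hPi : P i := ⟨h2, lt_of_lt_of_le hts' h1⟩
          have hw0 : w i = s := by rw [hw]; dsimp only; rw [h2]; exact max_eq_right hts'.le
          rw [if_pos hPi, hw1, hw0, h2]
          calc edist (c (u (i + 1))) (c t) ≤ edist (c (u (i + 1))) (c s) + edist (c s) (c t) :=
                edist_triangle _ _ _
            _ ≤ edist (c (u (i + 1))) (c s) + ENNReal.ofReal η := add_le_add_right hest _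
        · have hw0 : w i = u i := max_eq_left h2
          rw [hw1, hw0]
          exact le_add_of_nonneg_right (zero_le)
    have hPcard : ∑ i ∈ Finset.range m, (if P i then ENNReal.ofReal η else 0) ≤
        ENNReal.ofReal η := by
      rw [← Finset.sum_filter]
      have hcard : ((Finset.range m).filter P).card ≤ 1 := by
        refine Finset.card_le_one.2 fun a ha b hb => ?_
        simp only [Finset.mem_filter, Finset.mem_range, hP] at ha hb
        by_contra hne
        rcases lt_or_gt_of_ne hne with h | h
        · have := hu (by omega : a + 1 ≤ b)
          rw [hb.2.1] at this
          exact absurd (lt_of_lt_of_le ha.2.2 this) (lt_irrefl t)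
        · have := hu (by omega : b + 1 ≤ a)
          rw [ha.2.1] at this
          exact absurd (lt_of_lt_of_le hb.2.2 this) (lt_irrefl t)
      rw [Finset.sum_const]
      calc ((Finset.range m).filter P).card • ENNReal.ofReal η
          ≤ 1 • ENNReal.ofReal η := smul_le_smul_of_nonneg_right (by exact_mod_cast hcard) (zero_le)
        _ = ENNReal.ofReal η := one_smul _ _
    have hsum2 : (∑ i ∈ Finset.range m, edist (c (u (i + 1))) (c (u i))) ≤
        eVariationOn c (Set.Icc s 1) + ENNReal.ofReal η := by
      calc (∑ i ∈ Finset.range m, edist (c (u (i + 1))) (c (u i)))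
          ≤ ∑ i ∈ Finset.range m, (edist (c (w (i + 1))) (c (w i))
              + (if P i then ENNReal.ofReal η else 0)) :=
            Finset.sum_le_sum fun i _ => hterm i
        _ = (∑ i ∈ Finset.range m, edist (c (w (i + 1))) (c (w i)))
              + ∑ i ∈ Finset.range m, (if P i then ENNReal.ofReal η else 0) :=
            Finset.sum_add_distrib
        _ ≤ eVariationOn c (Set.Icc s 1) + ENNReal.ofReal η :=
            add_le_add (eVariationOn.sum_le (f := c) (n := m) hwmono hwmem) hPcard
    have hadd : eVariationOn c (Set.Icc t s) + eVariationOn c (Set.Icc s 1) =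
        eVariationOn c (Set.Icc t 1) := by
      have := eVariationOn.Icc_add_Icc c (s := Set.univ) hts hs1 (Set.mem_univ s)
      simpa using this
    have hfins : eVariationOn c (Set.Icc s 1) ≠ ⊤ :=
      fun h => hfin (top_le_iff.1 (h ▸ eVariationOn.mono c
        (Set.Icc_subset_Icc_left (le_trans ht.1 hts))))
    have : eVariationOn c (Set.Icc t s) + eVariationOn c (Set.Icc s 1) ≤
        ENNReal.ofReal (2 * η) + eVariationOn c (Set.Icc s 1) := by
      rw [hadd]
      calc eVariationOn c (Set.Icc t 1)
          ≤ (eVariationOn c (Set.Icc s 1) + ENNReal.ofReal η) + ENNReal.ofReal η :=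
            le_trans hEsum (add_le_add_left hsum2 _)
        _ = ENNReal.ofReal (2 * η) + eVariationOn c (Set.Icc s 1) := by
            rw [add_assoc, ← ENNReal.ofReal_add hη.le hη.le, add_comm]
            norm_num [two_mul]
    exact (ENNReal.add_le_add_iff_right hfins).1 this
  · -- all points equal t: variation on Icc t 1 is at most η
    push_neg at hA
    exfalso
    apply absurd hEsum
    have : ∀ i ∈ Finset.range m, edist (c (u (i + 1))) (c (u i)) = 0 := by
      intro i hi
      rw [Finset.mem_range] at hi
      have h1 : u i = t := le_antisymm (hA i (by omega)) (us i).1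
      have h2 : u (i + 1) = t := le_antisymm (hA (i + 1) (by omega)) (us (i + 1)).1
      rw [h1, h2, edist_self]
    rw [Finset.sum_congr rfl this, Finset.sum_const, smul_zero, zero_add]
    exact not_le.2 hsmall


open Set in
lemma stmt10_left_small {X : Type*} [MetricSpace X] {c : ℝ → X}
    (hc : ∀ t : ℝ, ∀ ε' > (0:ℝ), ∃ δ > (0:ℝ), ∀ s : ℝ, |s - t| < δ → dist (c s) (c t) < ε')
    (hfin : eVariationOn c (Set.Icc 0 1) ≠ ⊤)
    {t : ℝ} (ht : t ∈ Set.Icc (0:ℝ) 1) {η : ℝ} (hη : 0 < η) :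
    ∃ δ > (0:ℝ), ∀ s, 0 ≤ s → s ≤ t → t - s < δ →
      eVariationOn c (Set.Icc s t) ≤ ENNReal.ofReal (2 * η) := by
  classical
  obtain ⟨δ₀, hδ₀, hδ₀d⟩ := hc t η hη
  have hmono2η : ENNReal.ofReal η ≤ ENNReal.ofReal (2 * η) :=
    ENNReal.ofReal_le_ofReal (by linarith)
  have hfin1 : eVariationOn c (Set.Icc 0 t) ≠ ⊤ :=
    fun h => hfin (top_le_iff.1 (h ▸ eVariationOn.mono c (Set.Icc_subset_Icc_right ht.2)))
  by_cases hsmall : eVariationOn c (Set.Icc 0 t) ≤ ENNReal.ofReal η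
  · refine ⟨δ₀, hδ₀, fun s hs0 hst _ => ?_⟩
    exact le_trans (le_trans (eVariationOn.mono c (Set.Icc_subset_Icc_left hs0)) hsmall) hmono2η
  push_neg at hsmall
  have hlt : eVariationOn c (Set.Icc 0 t) - ENNReal.ofReal η < eVariationOn c (Set.Icc 0 t) :=
    ENNReal.sub_lt_self hfin1 (fun h => by simp [h] at hsmall)
      (ne_of_gt (ENNReal.ofReal_pos.2 hη))
  rw [eVariationOn] at hlt
  obtain ⟨⟨m, u, hu, us⟩, hp⟩ := lt_iSup_iff.1 hlt
  have hEsum : eVariationOn c (Set.Icc 0 t) ≤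
      (∑ i ∈ Finset.range m, edist (c (u (i + 1))) (c (u i))) + ENNReal.ofReal η := by
    have := tsub_add_cancel_of_le hsmall.le
    calc eVariationOn c (Set.Icc 0 t)
        = eVariationOn c (Set.Icc 0 t) - ENNReal.ofReal η + ENNReal.ofReal η := this.symm
      _ ≤ _ := add_le_add_left hp.le _
  set A : Finset ℕ := (Finset.range (m + 1)).filter (fun j => u j < t) with hA
  by_cases hAne : A.Nonempty
  · set j₁ := A.max' hAne with hj₁
    have hj₁mem : j₁ ∈ A := A.max'_mem hAne
    have hj₁lt : u j₁ < t := (Finset.mem_filter.1 hj₁mem).2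
    have hmax : ∀ j, j ≤ m → u j < t → u j ≤ u j₁ := by
      intro j hj hjt
      exact hu (A.le_max' j (Finset.mem_filter.2 ⟨Finset.mem_range.2 (by omega), hjt⟩))
    refine ⟨min δ₀ (t - u j₁), lt_min hδ₀ (by linarith), fun s hs0 hst hsδ => ?_⟩
    rcases eq_or_lt_of_le hst with rfl | hst'
    · have hss : (Set.Icc s s).Subsingleton := by
        rw [Set.Icc_self]; exact Set.subsingleton_singleton
      rw [eVariationOn.subsingleton c hss]
      exact zero_le
    have hj₁s : u j₁ < s := by
      have : t - s < t - u j₁ := lt_of_lt_of_le hsδ (min_le_right _ _)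
      linarith
    set w : ℕ → ℝ := fun j => min (u j) s with hw
    have hwmono : Monotone w := fun a b hab => min_le_min (hu hab) le_rfl
    have hwmem : ∀ j, w j ∈ Set.Icc 0 s := fun j =>
      ⟨le_min (us j).1 hs0, min_le_right _ _⟩
    have hest : edist (c s) (c t) ≤ ENNReal.ofReal η := by
      rw [edist_dist]
      refine ENNReal.ofReal_le_ofReal (le_of_lt (hδ₀d s ?_))
      rw [abs_sub_lt_iff]
      exact ⟨by linarith, lt_of_lt_of_le hsδ (min_le_left _ _)⟩
    set P : ℕ → Prop := fun i => u i < t ∧ u (i + 1) = t with hP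
    have hterm : ∀ i, i < m → edist (c (u (i + 1))) (c (u i)) ≤
        edist (c (w (i + 1))) (c (w i)) + (if P i then ENNReal.ofReal η else 0) := by
      intro i him
      rcases lt_or_ge (u i) t with h2 | h2
      · have hwi : w i = u i := min_eq_left (le_of_lt (lt_of_le_of_lt (hmax i (by omega) h2) hj₁s))
        rcases lt_or_ge (u (i + 1)) t with h1 | h1
        · have hwi1 : w (i + 1) = u (i + 1) :=
            min_eq_left (le_of_lt (lt_of_le_of_lt (hmax (i + 1) (by omega) h1) hj₁s))
          rw [hwi, hwi1]
          exact le_add_of_nonneg_right (zero_le)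
        · have h1' : u (i + 1) = t := le_antisymm (us (i + 1)).2 h1
          have hPi : P i := ⟨h2, h1'⟩
          have hwi1 : w (i + 1) = s := by
            rw [hw]; dsimp only; rw [h1']; exact min_eq_right hst'.le
          rw [if_pos hPi, hwi, hwi1, h1']
          calc edist (c t) (c (u i)) ≤ edist (c t) (c s) + edist (c s) (c (u i)) :=
                edist_triangle _ _ _
            _ ≤ ENNReal.ofReal η + edist (c s) (c (u i)) := by
                rw [edist_comm (c t) (c s)]
                exact add_le_add_left hest _
            _ = edist (c s) (c (u i)) + ENNReal.ofReal η := add_comm _ _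
      · have h2' : u i = t := le_antisymm (us i).2 h2
        have h1' : u (i + 1) = t := le_antisymm (us (i + 1)).2 (h2' ▸ hu (Nat.le_succ i))
        have hz : edist (c (u (i + 1))) (c (u i)) = 0 := by rw [h1', h2', edist_self]
        exact hz.le.trans (zero_le)
    have hPcard : ∑ i ∈ Finset.range m, (if P i then ENNReal.ofReal η else 0) ≤
        ENNReal.ofReal η := by
      rw [← Finset.sum_filter]
      have hcard : ((Finset.range m).filter P).card ≤ 1 := by
        refine Finset.card_le_one.2 fun a ha b hb => ?_
        simp only [Finset.mem_filter, Finset.mem_range, hP] at ha hb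
        by_contra hne
        rcases lt_or_gt_of_ne hne with h | h
        · have := hu (by omega : a + 1 ≤ b)
          rw [ha.2.2] at this
          exact absurd (lt_of_le_of_lt this hb.2.1) (lt_irrefl t)
        · have := hu (by omega : b + 1 ≤ a)
          rw [hb.2.2] at this
          exact absurd (lt_of_le_of_lt this ha.2.1) (lt_irrefl t)
      rw [Finset.sum_const]
      calc ((Finset.range m).filter P).card • ENNReal.ofReal η
          ≤ 1 • ENNReal.ofReal η := smul_le_smul_of_nonneg_right (by exact_mod_cast hcard) (zero_le)
        _ = ENNReal.ofReal η := one_smul _ _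
    have hsum2 : (∑ i ∈ Finset.range m, edist (c (u (i + 1))) (c (u i))) ≤
        eVariationOn c (Set.Icc 0 s) + ENNReal.ofReal η := by
      calc (∑ i ∈ Finset.range m, edist (c (u (i + 1))) (c (u i)))
          ≤ ∑ i ∈ Finset.range m, (edist (c (w (i + 1))) (c (w i))
              + (if P i then ENNReal.ofReal η else 0)) :=
            Finset.sum_le_sum fun i hi => hterm i (Finset.mem_range.1 hi)
        _ = (∑ i ∈ Finset.range m, edist (c (w (i + 1))) (c (w i)))
              + ∑ i ∈ Finset.range m, (if P i then ENNReal.ofReal η else 0) :=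
            Finset.sum_add_distrib
        _ ≤ eVariationOn c (Set.Icc 0 s) + ENNReal.ofReal η :=
            add_le_add (eVariationOn.sum_le (f := c) (n := m) hwmono hwmem) hPcard
    have hadd : eVariationOn c (Set.Icc 0 s) + eVariationOn c (Set.Icc s t) =
        eVariationOn c (Set.Icc 0 t) := by
      have := eVariationOn.Icc_add_Icc c (s := Set.univ) hs0 hst (Set.mem_univ s)
      simpa using this
    have hfins : eVariationOn c (Set.Icc 0 s) ≠ ⊤ :=
      fun h => hfin (top_le_iff.1 (h ▸ eVariationOn.mono c
        (Set.Icc_subset_Icc_right (le_trans hst ht.2))))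
    have hkey : eVariationOn c (Set.Icc s t) + eVariationOn c (Set.Icc 0 s) ≤
        ENNReal.ofReal (2 * η) + eVariationOn c (Set.Icc 0 s) := by
      rw [add_comm (eVariationOn c (Set.Icc s t)), hadd]
      calc eVariationOn c (Set.Icc 0 t)
          ≤ (eVariationOn c (Set.Icc 0 s) + ENNReal.ofReal η) + ENNReal.ofReal η :=
            le_trans hEsum (add_le_add_left hsum2 _)
        _ = ENNReal.ofReal (2 * η) + eVariationOn c (Set.Icc 0 s) := by
            rw [add_assoc, ← ENNReal.ofReal_add hη.le hη.le, add_comm]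
            norm_num [two_mul]
    exact (ENNReal.add_le_add_iff_right hfins).1 hkey
  · have hAe : A = ∅ := Finset.not_nonempty_iff_eq_empty.1 hAne
    exfalso
    apply absurd hEsum
    have hall : ∀ j, j ≤ m → u j = t := by
      intro j hj
      have : j ∉ A := by rw [hAe]; exact Finset.notMem_empty j
      simp only [hA, Finset.mem_filter, Finset.mem_range, not_and, not_lt] at this
      exact le_antisymm (us j).2 (this (by omega))
    have : ∀ i ∈ Finset.range m, edist (c (u (i + 1))) (c (u i)) = 0 := by
      intro i hi
      rw [Finset.mem_range] at hi
      rw [hall i (by omega), hall (i + 1) (by omega), edist_self]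
    rw [Finset.sum_congr rfl this, Finset.sum_const, smul_zero, zero_add]
    exact not_le.2 hsmall

lemma stmt10_exists_ell {X : Type*} [MetricSpace X] {c : ℝ → X} {B : ℝ} (hB0 : 0 ≤ B)
    (hc : ∀ t : ℝ, ∀ ε' > (0:ℝ), ∃ δ > (0:ℝ), ∀ s : ℝ, |s - t| < δ → dist (c s) (c t) < ε')
    (hB : ∀ S ∈ partitionSums (fun a b : X => dist a b) c, S ≤ B) :
    ∃ ℓ : ℝ → ℝ, ℓ 0 = 0 ∧ 0 ≤ ℓ 1 ∧ ℓ 1 ≤ B ∧ ContinuousOn ℓ (Set.Icc 0 1) ∧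
      (∀ a ∈ Set.Icc (0:ℝ) 1, ∀ b ∈ Set.Icc (0:ℝ) 1,
        dist (c a) (c b) ≤ |ℓ b - ℓ a|) := by
  have hfin : eVariationOn c (Set.Icc 0 1) ≠ ⊤ :=
    ne_top_of_le_ne_top ENNReal.ofReal_ne_top (stmt10_evar_le hB)
  have hfinab : ∀ a b : ℝ, 0 ≤ a → b ≤ 1 → eVariationOn c (Set.Icc a b) ≠ ⊤ := by
    intro a b ha hb
    exact ne_top_of_le_ne_top hfin (eVariationOn.mono c (Set.Icc_subset_Icc ha hb))
  set ℓ : ℝ → ℝ := fun t => (eVariationOn c (Set.Icc 0 t)).toReal with hℓ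
  have hadd : ∀ a b : ℝ, 0 ≤ a → a ≤ b → b ≤ 1 →
      ℓ a + (eVariationOn c (Set.Icc a b)).toReal = ℓ b := by
    intro a b ha hab hb1
    have h := eVariationOn.Icc_add_Icc c (s := Set.univ) ha hab (Set.mem_univ a)
    simp only [Set.univ_inter] at h
    rw [hℓ]
    dsimp only
    rw [← ENNReal.toReal_add (hfinab 0 a le_rfl (le_trans hab hb1)) (hfinab a b ha hb1), h]
  have hdist : ∀ a ∈ Set.Icc (0:ℝ) 1, ∀ b ∈ Set.Icc (0:ℝ) 1, a ≤ b →
      dist (c a) (c b) ≤ ℓ b - ℓ a := by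
    intro a ha b hb hab
    have h1 : edist (c a) (c b) ≤ eVariationOn c (Set.Icc a b) :=
      eVariationOn.edist_le c (Set.left_mem_Icc.2 hab) (Set.right_mem_Icc.2 hab)
    have h2 : dist (c a) (c b) ≤ (eVariationOn c (Set.Icc a b)).toReal := by
      rw [dist_edist]
      exact ENNReal.toReal_mono (hfinab a b ha.1 hb.2) h1
    have h3 := hadd a b ha.1 hab hb.2
    linarith [h2, ENNReal.toReal_nonneg (a := eVariationOn c (Set.Icc a b))]
  refine ⟨ℓ, ?_, ENNReal.toReal_nonneg, ?_, ?_, ?_⟩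
  · have hss : (Set.Icc (0:ℝ) 0).Subsingleton := by
      rw [Set.Icc_self]; exact Set.subsingleton_singleton
    rw [hℓ]; dsimp only; rw [eVariationOn.subsingleton c hss]; rfl
  · exact ENNReal.toReal_le_of_le_ofReal hB0 (stmt10_evar_le hB)
  · -- continuity
    intro t ht
    rw [Metric.continuousWithinAt_iff]
    intro ε hε
    have hη : (0:ℝ) < ε / 3 := by linarith
    obtain ⟨δ₁, hδ₁, hR⟩ := stmt10_right_small hc hfin ht hη
    obtain ⟨δ₂, hδ₂, hL⟩ := stmt10_left_small hc hfin ht hη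
    refine ⟨min δ₁ δ₂, lt_min hδ₁ hδ₂, fun s hs hdst => ?_⟩
    have habs : |s - t| < min δ₁ δ₂ := by rwa [Real.dist_eq] at hdst
    rcases le_total t s with hts | hst
    · have h1 : eVariationOn c (Set.Icc t s) ≤ ENNReal.ofReal (2 * (ε / 3)) :=
        hR s hts hs.2 (lt_of_lt_of_le (lt_of_abs_lt habs) (min_le_left _ _))
      have h2 := hadd t s ht.1 hts hs.2
      have h3 : (eVariationOn c (Set.Icc t s)).toReal ≤ 2 * (ε / 3) :=
        ENNReal.toReal_le_of_le_ofReal (by linarith) h1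
      rw [Real.dist_eq]
      have hnn : (0:ℝ) ≤ ℓ s - ℓ t := by
        have := ENNReal.toReal_nonneg (a := eVariationOn c (Set.Icc t s))
        linarith
      rw [abs_of_nonneg hnn]
      linarith
    · have h1 : eVariationOn c (Set.Icc s t) ≤ ENNReal.ofReal (2 * (ε / 3)) :=
        hL s hs.1 hst (by
          have := lt_of_lt_of_le (lt_of_abs_lt (abs_sub_comm s t ▸ habs)) (min_le_right _ _)
          linarith)
      have h2 := hadd s t hs.1 hst ht.2
      have h3 : (eVariationOn c (Set.Icc s t)).toReal ≤ 2 * (ε / 3) :=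
        ENNReal.toReal_le_of_le_ofReal (by linarith) h1
      rw [Real.dist_eq]
      have hnp : ℓ s - ℓ t ≤ 0 := by
        have := ENNReal.toReal_nonneg (a := eVariationOn c (Set.Icc s t))
        linarith
      rw [abs_of_nonpos hnp]
      linarith
  · intro a ha b hb
    rcases le_total a b with hab | hba
    · calc dist (c a) (c b) ≤ ℓ b - ℓ a := hdist a ha b hb hab
        _ ≤ |ℓ b - ℓ a| := le_abs_self _
    · calc dist (c a) (c b) = dist (c b) (c a) := dist_comm _ _
        _ ≤ ℓ a - ℓ b := hdist b hb a ha hba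
        _ ≤ |ℓ b - ℓ a| := (abs_sub_comm (ℓ b) (ℓ a)) ▸ le_abs_self _

/-- If `Φ` is induced by a norm (i.e. satisfies (1)-(4)) and the
`(Xᵢ, dᵢ)` are length spaces, then `(∏ Xᵢ, d_Φ)` is a length space. -/
theorem stmt_10 {n : ℕ} (Φ : (Fin n → ℝ) → ℝ)
    (hpos : ∀ q : Fin n → ℝ, 0 ≤ q → 0 ≤ Φ q)
    (hdef : ∀ q : Fin n → ℝ, 0 ≤ q → (Φ q = 0 ↔ q = 0))
    (hmono : ∀ p q : Fin n → ℝ, 0 ≤ q → q ≤ p → Φ q ≤ Φ p)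
    (hsub : ∀ p q : Fin n → ℝ, 0 ≤ p → 0 ≤ q → Φ (p + q) ≤ Φ p + Φ q)
    (hhom : ∀ (l : ℝ) (q : Fin n → ℝ), 0 ≤ l → 0 ≤ q → Φ (l • q) = l * Φ q)
    (X : Fin n → Type*) [∀ i, MetricSpace (X i)]
    (hX : ∀ i, IsLengthSpaceWith (fun a b : X i => dist a b)) :
    IsLengthSpaceWith (fun x y : ∀ i, X i => Φ (fun i => dist (x i) (y i))) := by
  intro x y ε hε
  have hΦ1 : 0 ≤ Φ 1 := hpos 1 (fun i => zero_le_one)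
  set ε' : ℝ := ε / (Φ 1 + 1) with hε'
  have hε'pos : 0 < ε' := div_pos hε (by linarith)
  choose cc hc0 hc1 hccont hcsum using fun i => hX i (x i) (y i) ε' hε'pos
  have hBnn : ∀ i, (0:ℝ) ≤ dist (x i) (y i) + ε' :=
    fun i => add_nonneg dist_nonneg hε'pos.le
  choose ℓ hℓ0 hℓ1nn hℓ1le hℓcont hℓdist using fun i =>
    stmt10_exists_ell (hBnn i) (hccont i) (hcsum i)
  set L : Fin n → ℝ := fun i => ℓ i 1 with hLdef
  have hLnn : ∀ i, 0 ≤ L i := fun i => hℓ1nn i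
  -- choice of the reparametrization
  have hφex : ∀ i, ∀ s : ℝ, ∃ u, u ∈ Set.Icc (0:ℝ) 1 ∧
      (s ∈ Set.Icc (0:ℝ) 1 → ℓ i u = s * L i) := by
    intro i s
    by_cases hs : s ∈ Set.Icc (0:ℝ) 1
    · have hmem : s * L i ∈ Set.Icc (ℓ i 0) (ℓ i 1) := by
        rw [hℓ0 i]
        exact ⟨mul_nonneg hs.1 (hLnn i), by
          calc s * L i ≤ 1 * L i := mul_le_mul_of_nonneg_right hs.2 (hLnn i)
            _ = ℓ i 1 := one_mul _⟩
      obtain ⟨u, hu, hu2⟩ := intermediate_value_Icc zero_le_one (hℓcont i) hmem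
      exact ⟨u, hu, fun _ => hu2⟩
    · exact ⟨0, ⟨le_rfl, zero_le_one⟩, fun h => absurd h hs⟩
  choose φ hφmem hφeq using hφex
  set τ : ℝ → ℝ := fun s => max 0 (min s 1) with hτ
  have hτmem : ∀ s, τ s ∈ Set.Icc (0:ℝ) 1 := fun s =>
    ⟨le_max_left _ _, max_le zero_le_one (min_le_right _ _)⟩
  have hτid : ∀ s ∈ Set.Icc (0:ℝ) 1, τ s = s := by
    intro s hs
    rw [hτ]; dsimp only
    rw [min_eq_left hs.2, max_eq_right hs.1]
  have hτlip : ∀ s t : ℝ, |τ s - τ t| ≤ |s - t| := by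
    intro s t
    rw [hτ]; dsimp only
    calc |max 0 (min s 1) - max 0 (min t 1)|
        = |max (min s 1) 0 - max (min t 1) 0| := by
          rw [max_comm (min s 1) 0, max_comm (min t 1) 0]
      _ ≤ |min s 1 - min t 1| := abs_max_sub_max_le_abs _ _ _
      _ ≤ max |s - t| |(1:ℝ) - 1| := abs_min_sub_min_le_max _ _ _ _
      _ = |s - t| := by rw [sub_self, abs_zero]; exact max_eq_left (abs_nonneg _)
  set ψ : ℝ → (∀ i, X i) := fun s => fun i => cc i (φ i (τ s)) with hψ
  -- key distance estimate
  have hkey : ∀ (i : Fin n) (a b : ℝ), a ∈ Set.Icc (0:ℝ) 1 → b ∈ Set.Icc (0:ℝ) 1 →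
      dist (cc i (φ i a)) (cc i (φ i b)) ≤ |a - b| * L i := by
    intro i a b ha hb
    calc dist (cc i (φ i a)) (cc i (φ i b))
        ≤ |ℓ i (φ i b) - ℓ i (φ i a)| := hℓdist i _ (hφmem i a) _ (hφmem i b)
      _ = |b * L i - a * L i| := by rw [hφeq i a ha, hφeq i b hb]
      _ = |b - a| * |L i| := by rw [← sub_mul, abs_mul]
      _ = |a - b| * L i := by rw [abs_sub_comm, abs_of_nonneg (hLnn i)]
  have hΦle : ∀ (r : ℝ) (v : Fin n → ℝ), 0 ≤ r → (∀ i, 0 ≤ v i) →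
      (∀ i, v i ≤ r * L i) → Φ v ≤ r * Φ L := by
    intro r v hr hv hvL
    calc Φ v ≤ Φ (r • L) := hmono (r • L) v (fun i => hv i) (fun i => hvL i)
      _ = r * Φ L := hhom r L hr (fun i => hLnn i)
  have hΦL : Φ L ≤ Φ (fun i => dist (x i) (y i)) + ε := by
    have h1 : Φ L ≤ Φ (fun i => dist (x i) (y i) + ε') :=
      hmono _ L (fun i => hLnn i) (fun i => hℓ1le i)
    have h2 : (fun i => dist (x i) (y i) + ε') =
        (fun i => dist (x i) (y i)) + (fun _ => ε') := rfl
    have h3 : Φ ((fun i => dist (x i) (y i)) + (fun _ => ε')) ≤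
        Φ (fun i => dist (x i) (y i)) + Φ (fun _ : Fin n => ε') :=
      hsub _ _ (fun i => dist_nonneg) (fun i => hε'pos.le)
    have h4 : Φ (fun _ : Fin n => ε') = ε' * Φ 1 := by
      have : (fun _ : Fin n => ε') = ε' • (1 : Fin n → ℝ) := by
        funext i; simp
      rw [this]
      exact hhom ε' 1 hε'pos.le (fun i => zero_le_one)
    have h5 : ε' * Φ 1 ≤ ε := by
      rw [hε']
      rw [div_mul_eq_mul_div, div_le_iff₀ (by linarith : (0:ℝ) < Φ 1 + 1)]
      nlinarith
    calc Φ L ≤ Φ (fun i => dist (x i) (y i) + ε') := h1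
      _ ≤ Φ (fun i => dist (x i) (y i)) + Φ (fun _ : Fin n => ε') := by rw [h2]; exact h3
      _ ≤ Φ (fun i => dist (x i) (y i)) + ε := by linarith
  have hΦLnn : 0 ≤ Φ L := hpos L (fun i => hLnn i)
  refine ⟨ψ, ?_, ?_, ?_, ?_⟩
  · -- ψ 0 = x
    funext i
    have hτ0 : τ 0 = 0 := hτid 0 ⟨le_rfl, zero_le_one⟩
    have h1 : ℓ i (φ i 0) = 0 := by
      rw [hφeq i 0 ⟨le_rfl, zero_le_one⟩]; ring
    have h2 : dist (cc i (φ i 0)) (cc i 0) ≤ |ℓ i 0 - ℓ i (φ i 0)| :=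
      hℓdist i _ (hφmem i 0) 0 ⟨le_rfl, zero_le_one⟩
    rw [hℓ0 i, h1] at h2
    simp only [sub_zero, abs_zero] at h2
    have : cc i (φ i 0) = cc i 0 := dist_le_zero.1 h2
    rw [hψ]; dsimp only
    rw [hτ0, this, hc0 i]
  · -- ψ 1 = y
    funext i
    have hτ1 : τ 1 = 1 := hτid 1 ⟨zero_le_one, le_rfl⟩
    have h1 : ℓ i (φ i 1) = L i := by
      rw [hφeq i 1 ⟨zero_le_one, le_rfl⟩]; ring
    have h2 : dist (cc i (φ i 1)) (cc i 1) ≤ |ℓ i 1 - ℓ i (φ i 1)| :=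
      hℓdist i _ (hφmem i 1) 1 ⟨zero_le_one, le_rfl⟩
    rw [h1] at h2
    simp only [hLdef, sub_self, abs_zero] at h2
    have : cc i (φ i 1) = cc i 1 := dist_le_zero.1 h2
    rw [hψ]; dsimp only
    rw [hτ1, this, hc1 i]
  · -- continuity
    intro t ε'' hε''
    refine ⟨ε'' / (Φ L + 1), div_pos hε'' (by linarith), fun s hst => ?_⟩
    dsimp only
    have hdists : ∀ i, dist (ψ s i) (ψ t i) ≤ |s - t| * L i := by
      intro i
      rw [hψ]; dsimp only
      calc dist (cc i (φ i (τ s))) (cc i (φ i (τ t)))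
          ≤ |τ s - τ t| * L i := hkey i _ _ (hτmem s) (hτmem t)
        _ ≤ |s - t| * L i := mul_le_mul_of_nonneg_right (hτlip s t) (hLnn i)
    calc Φ (fun i => dist (ψ s i) (ψ t i))
        ≤ |s - t| * Φ L := hΦle _ _ (abs_nonneg _) (fun i => dist_nonneg) hdists
      _ ≤ |s - t| * (Φ L + 1) := mul_le_mul_of_nonneg_left (by linarith) (abs_nonneg _)
      _ < (ε'' / (Φ L + 1)) * (Φ L + 1) := by
          exact mul_lt_mul_of_pos_right hst (by linarith)
      _ = ε'' := div_mul_cancel₀ _ (by linarith)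
  · -- partition sums
    rintro S ⟨k, t, htm, ht0, htl, rfl⟩
    dsimp only
    have htmem : ∀ j : Fin (k + 1), t j ∈ Set.Icc (0:ℝ) 1 := by
      intro j
      constructor
      · rw [← ht0]; exact htm (Fin.zero_le j)
      · rw [← htl]; exact htm (Fin.le_last j)
    have hterm : ∀ j : Fin k,
        Φ (fun i => dist (ψ (t j.castSucc) i) (ψ (t j.succ) i)) ≤
          (t j.succ - t j.castSucc) * Φ L := by
      intro j
      have hjle : t j.castSucc ≤ t j.succ := htm (Fin.castSucc_le_succ j)
      refine hΦle _ _ (by linarith) (fun i => dist_nonneg) (fun i => ?_)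
      rw [hψ]; dsimp only
      rw [hτid _ (htmem j.castSucc), hτid _ (htmem j.succ)]
      calc dist (cc i (φ i (t j.castSucc))) (cc i (φ i (t j.succ)))
          ≤ |t j.castSucc - t j.succ| * L i :=
            hkey i _ _ (htmem j.castSucc) (htmem j.succ)
        _ = (t j.succ - t j.castSucc) * L i := by
            rw [abs_sub_comm, abs_of_nonneg (by linarith)]
    have htel : ∑ j : Fin k, (t j.succ - t j.castSucc) = 1 := by
      set g : ℕ → ℝ := fun a => t ⟨min a k, by omega⟩ with hg
      have h1 : ∀ j : Fin k, t j.castSucc = g j.val := by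
        intro j
        rw [hg]; dsimp only
        congr 1
        exact Fin.ext (by simp [Nat.min_eq_left (le_of_lt j.isLt)])
      have h2 : ∀ j : Fin k, t j.succ = g (j.val + 1) := by
        intro j
        rw [hg]; dsimp only
        congr 1
        exact Fin.ext (by simp [Nat.min_eq_left (Nat.succ_le_of_lt j.isLt)])
      calc ∑ j : Fin k, (t j.succ - t j.castSucc)
          = ∑ j : Fin k, (g (j.val + 1) - g j.val) := by
            refine Finset.sum_congr rfl fun j _ => ?_
            rw [h1 j, h2 j]
        _ = ∑ a ∈ Finset.range k, (g (a + 1) - g a) :=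
            Fin.sum_univ_eq_sum_range (fun a => g (a + 1) - g a) k
        _ = g k - g 0 := Finset.sum_range_sub g k
        _ = 1 := by
            rw [hg]; dsimp only
            have e1 : (⟨min k k, by omega⟩ : Fin (k+1)) = Fin.last k :=
              Fin.ext (by simp)
            have e2 : (⟨min 0 k, by omega⟩ : Fin (k+1)) = 0 :=
              Fin.ext (by simp)
            rw [e1, e2, htl, ht0]; ring
    calc ∑ j : Fin k, Φ (fun i => dist (ψ (t j.castSucc) i) (ψ (t j.succ) i))
        ≤ ∑ j : Fin k, (t j.succ - t j.castSucc) * Φ L :=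
          Finset.sum_le_sum fun j _ => hterm j
      _ = (∑ j : Fin k, (t j.succ - t j.castSucc)) * Φ L := by
          rw [Finset.sum_mul]
      _ = Φ L := by rw [htel, one_mul]
      _ ≤ Φ (fun i => dist (x i) (y i)) + ε := hΦL
end

section
/- Let Φ : [0,∞)^n → [0,∞) satisfy conditions (A) and (B) and suppose d_Φ turns the product of any n length spaces into a length space. Then the restriction of Φ to each coordinate ray is continuous at 0, i.e. Φ(t eᵢ) → 0 as t → 0⁺ for each i. -/
-- auxiliary: a subtype of ℝ that is all of ℝ or {0}, is a length space
theorem aux_length (P : Prop) : IsLengthSpaceWith (fun a b : {x : ℝ // P ∨ x = 0} => dist a b) := by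
  intro x y ε hε
  have hmem : ∀ s : ℝ, P ∨ x.1 + s * (y.1 - x.1) = 0 := by
    intro s
    by_cases hP : P
    · exact Or.inl hP
    · right
      have hx := x.2.resolve_left hP
      have hy := y.2.resolve_left hP
      rw [hx, hy]; ring
  refine ⟨fun s => ⟨x.1 + s * (y.1 - x.1), hmem s⟩, ?_, ?_, ?_, ?_⟩
  · exact Subtype.ext (by ring)
  · exact Subtype.ext (by ring)
  · intro t ε' hε'
    refine ⟨ε' / (|y.1 - x.1| + 1), by positivity, fun s hs => ?_⟩
    have hd : dist (⟨x.1 + s * (y.1 - x.1), hmem s⟩ : {x : ℝ // P ∨ x = 0})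
        ⟨x.1 + t * (y.1 - x.1), hmem t⟩ = |s - t| * |y.1 - x.1| := by
      rw [Subtype.dist_eq, Real.dist_eq, ← abs_mul]
      ring_nf
    refine lt_of_eq_of_lt hd ?_
    calc |s - t| * |y.1 - x.1| ≤ |s - t| * (|y.1 - x.1| + 1) := by
          apply mul_le_mul_of_nonneg_left (by linarith) (abs_nonneg _)
      _ < (ε' / (|y.1 - x.1| + 1)) * (|y.1 - x.1| + 1) := by
          apply mul_lt_mul_of_pos_right hs (by positivity)
      _ = ε' := by field_simp
  · rintro S ⟨k, t, hmono, ht0, htl, rfl⟩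
    have hterm : ∀ j : Fin k,
        dist (⟨x.1 + t (Fin.castSucc j) * (y.1 - x.1), hmem _⟩ : {x : ℝ // P ∨ x = 0})
          ⟨x.1 + t j.succ * (y.1 - x.1), hmem _⟩
          = (t j.succ - t (Fin.castSucc j)) * |y.1 - x.1| := by
      intro j
      have hle : t (Fin.castSucc j) ≤ t j.succ := hmono (Fin.castSucc_le_succ j)
      rw [Subtype.dist_eq, Real.dist_eq]
      have : x.1 + t (Fin.castSucc j) * (y.1 - x.1) - (x.1 + t j.succ * (y.1 - x.1))
          = (t (Fin.castSucc j) - t j.succ) * (y.1 - x.1) := by ring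
      rw [this, abs_mul, abs_of_nonpos (by linarith), neg_sub]
    have hsum : ∑ j : Fin k,
        dist (⟨x.1 + t (Fin.castSucc j) * (y.1 - x.1), hmem _⟩ : {x : ℝ // P ∨ x = 0})
          ⟨x.1 + t j.succ * (y.1 - x.1), hmem _⟩ = |y.1 - x.1| := by
      rw [Finset.sum_congr rfl (fun j _ => hterm j), ← Finset.sum_mul]
      have : ∑ j : Fin k, (t j.succ - t (Fin.castSucc j))
          = t (Fin.last k) - t 0 := by
        set v : ℕ → ℝ := fun m => t ⟨min m k, by omega⟩ with hv
        have h1 : ∀ j : Fin k, t j.succ = v (j.1 + 1) := by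
          intro j
          congr 1
          exact Fin.ext (by simp [v, Nat.min_eq_left j.2])
        have h2 : ∀ j : Fin k, t (Fin.castSucc j) = v j.1 := by
          intro j
          congr 1
          exact Fin.ext (by simp [v, Nat.min_eq_left (le_of_lt j.2)])
        calc ∑ j : Fin k, (t j.succ - t (Fin.castSucc j))
            = ∑ j : Fin k, (v (j.1 + 1) - v j.1) := by
              exact Finset.sum_congr rfl (fun j _ => by rw [h1 j, h2 j])
          _ = ∑ m ∈ Finset.range k, (v (m + 1) - v m) := Fin.sum_univ_eq_sum_range (fun m => v (m + 1) - v m) k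
          _ = v k - v 0 := Finset.sum_range_sub v k
          _ = t (Fin.last k) - t 0 := by
              congr 1 <;> exact congrArg t (Fin.ext (by simp [v]))
      rw [this, htl, ht0]
      ring
    refine le_of_eq_of_le hsum ?_
    have : dist x y = |y.1 - x.1| := by
      rw [Subtype.dist_eq, Real.dist_eq, abs_sub_comm]
    show |y.1 - x.1| ≤ dist x y + ε
    linarith

/-- If `Φ` satisfies (A), (B) and `d_Φ` turns the product of any
`n` length spaces into a length space, then `Φ` is continuous at `0` along each
coordinate ray. -/
theorem stmt_12 {n : ℕ} (Φ : (Fin n → ℝ) → ℝ)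
    (hA : ∀ q : Fin n → ℝ, 0 ≤ q → (0 ≤ Φ q ∧ (Φ q = 0 ↔ q = 0)))
    (hB : ∀ q1 q2 q3 : Fin n → ℝ, 0 ≤ q1 → 0 ≤ q2 → 0 ≤ q3 →
      q1 ≤ q2 + q3 → q2 ≤ q1 + q3 → q3 ≤ q1 + q2 →
      Φ q1 ≤ Φ q2 + Φ q3)
    (hlen : ∀ (X : Fin n → Type) (_ : ∀ i, MetricSpace (X i)),
      (∀ i, IsLengthSpaceWith (fun a b : X i => dist a b)) →
      IsLengthSpaceWith (fun x y : ∀ i, X i => Φ (fun i => dist (x i) (y i)))) :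
    ∀ i : Fin n, ∀ ε > (0 : ℝ), ∃ δ > (0 : ℝ), ∀ t : ℝ, 0 < t → t < δ →
      Φ (Pi.single i t) < ε := by
  intro i ε hε
  -- nonnegativity of single vectors
  have hsing_nonneg : ∀ a : ℝ, 0 ≤ a → (0 : Fin n → ℝ) ≤ Pi.single i a := by
    intro a ha j
    by_cases hj : j = i <;> simp [Pi.single_apply, hj, ha]
  -- Step 1: there is some a > 0 with Φ (Pi.single i a) < ε/2
  have key : ∃ a > (0 : ℝ), Φ (Pi.single i a) < ε / 2 := by
    by_contra hno
    push_neg at hno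
    set X : Fin n → Type := fun j => {x : ℝ // j = i ∨ x = 0} with hX
    have hprod := hlen X (fun j => Subtype.metricSpace) (fun j => aux_length (j = i))
    set P0 : ∀ j, X j := fun j => ⟨0, Or.inr rfl⟩ with hP0
    set P1 : ∀ j, X j := fun j => ⟨if j = i then 1 else 0,
      by by_cases h : j = i <;> simp [h]⟩ with hP1
    obtain ⟨c, hc0, hc1, hcont, -⟩ := hprod P0 P1 1 one_pos
    set g : ℝ → ℝ := fun s => (c s i).1 with hg
    have hdistvec : ∀ s t : ℝ,
        (fun j => dist (c s j) (c t j)) = Pi.single i |g s - g t| := by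
      intro s t
      funext j
      by_cases hj : j = i
      · subst hj
        rw [Pi.single_eq_same]
        exact (Subtype.dist_eq _ _).trans (Real.dist_eq _ _)
      · have hs0 : (c s j).1 = 0 := (c s j).2.resolve_left hj
        have ht0 : (c t j).1 = 0 := (c t j).2.resolve_left hj
        have hd0 : dist (c s j) (c t j) = 0 := by
          rw [Subtype.dist_eq, hs0, ht0]; simp
        rw [hd0, Pi.single_apply, if_neg hj]
    -- local constancy of g
    have hloc : ∀ s : ℝ, ∃ δ > (0 : ℝ), ∀ s', |s' - s| < δ → g s' = g s := by
      intro s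
      obtain ⟨δ, hδ, hd⟩ := hcont s (ε / 2) (by linarith)
      refine ⟨δ, hδ, fun s' hs' => ?_⟩
      have h1 : Φ (fun j => dist (c s' j) (c s j)) < ε / 2 := hd s' hs'
      by_contra hne
      have hpos : 0 < |g s' - g s| := abs_pos.mpr (sub_ne_zero.mpr hne)
      rw [hdistvec s' s] at h1
      exact absurd h1 (not_lt.mpr (hno _ hpos))
    -- g is constant by connectedness of ℝ
    have hclopen : IsClopen {s : ℝ | g s = g 0} := by
      constructor
      · rw [← isOpen_compl_iff, Metric.isOpen_iff]
        intro s hs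
        obtain ⟨δ, hδ, h⟩ := hloc s
        refine ⟨δ, hδ, fun s' hs' => ?_⟩
        have := h s' (by simpa [Real.dist_eq] using hs')
        simp only [Set.mem_compl_iff, Set.mem_setOf_eq] at hs ⊢
        rw [this]; exact hs
      · rw [Metric.isOpen_iff]
        intro s hs
        obtain ⟨δ, hδ, h⟩ := hloc s
        refine ⟨δ, hδ, fun s' hs' => ?_⟩
        have := h s' (by simpa [Real.dist_eq] using hs')
        simp only [Set.mem_setOf_eq] at hs ⊢
        rw [this]; exact hs
    have huniv : {s : ℝ | g s = g 0} = Set.univ :=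
      hclopen.eq_univ ⟨0, rfl⟩
    have h1mem : (1 : ℝ) ∈ {s : ℝ | g s = g 0} := huniv ▸ Set.mem_univ 1
    have hg0 : g 0 = 0 := by rw [hg]; simp only [hc0, hP0]
    have hg1 : g 1 = 1 := by rw [hg]; simp only [hc1, hP1]; simp
    rw [Set.mem_setOf_eq, hg1, hg0] at h1mem
    exact one_ne_zero h1mem
  -- Step 2: Φ (single i t) ≤ 2 Φ (single i a) for t ≤ 2a
  obtain ⟨a, ha, hfa⟩ := key
  refine ⟨2 * a, by linarith, fun t ht htlt => ?_⟩
  have h2 : Φ (Pi.single i t) ≤ Φ (Pi.single i a) + Φ (Pi.single i a) := by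
    apply hB _ _ _ (hsing_nonneg t ht.le) (hsing_nonneg a ha.le) (hsing_nonneg a ha.le)
    · intro j
      by_cases hj : j = i <;> simp [Pi.single_apply, hj] <;> linarith
    · intro j
      by_cases hj : j = i <;> simp [Pi.single_apply, hj] <;> linarith
    · intro j
      by_cases hj : j = i <;> simp [Pi.single_apply, hj] <;> linarith
  linarith
end

section
/- Let Ψ be a norm on ℝ² with strictly convex unit ball, and suppose v, v₁, v₂ ∈ [0,∞)² satisfy v ≤ v₁ + v₂ componentwise and Ψ(v₁) + Ψ(v₂) = Ψ(v), with Ψ monotone on the positive quadrant. Then v₁ = λ₁v and v₂ = λ₂v for some λ₁, λ₂ ≥ 0 with λ₁ + λ₂ = 1. -/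
private lemma stmt13_key (Ψ : (Fin 2 → ℝ) → ℝ)
    (hdef : ∀ x : Fin 2 → ℝ, Ψ x = 0 ↔ x = 0)
    (hadd : ∀ x y : Fin 2 → ℝ, Ψ (x + y) ≤ Ψ x + Ψ y)
    (hsmul : ∀ (c : ℝ) (x : Fin 2 → ℝ), Ψ (c • x) = |c| * Ψ x)
    (hstrict : ∀ x y : Fin 2 → ℝ, x ≠ 0 → y ≠ 0 → Ψ (x + y) = Ψ x + Ψ y →
      ∃ c : ℝ, 0 < c ∧ y = c • x)
    (hmono : ∀ p q : Fin 2 → ℝ, 0 ≤ q → q ≤ p → Ψ q ≤ Ψ p)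
    (a b : Fin 2 → ℝ) (ha : 0 ≤ a) (hab : a ≤ b) (hΨ : Ψ a = Ψ b) : a = b := by
  by_cases ha0 : a = 0
  · subst ha0
    have h0 : Ψ (0 : Fin 2 → ℝ) = 0 := (hdef 0).mpr rfl
    have : Ψ b = 0 := by rw [← hΨ, h0]
    exact ((hdef b).mp this).symm
  · have hb0 : b ≠ 0 := by
      intro h; subst h
      exact ha0 (le_antisymm hab ha)
    have h2a : (2:ℝ) • a = a + a := two_smul ℝ a
    have hmono1 : Ψ ((2:ℝ) • a) ≤ Ψ (a + b) := by
      apply hmono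
      · rw [h2a]; exact add_nonneg ha ha
      · rw [h2a]; exact add_le_add le_rfl hab
    have hsm : Ψ ((2:ℝ) • a) = 2 * Ψ a := by
      rw [hsmul]; norm_num
    have hup : Ψ (a + b) ≤ Ψ a + Ψ b := hadd a b
    have heq2 : Ψ (a + b) = Ψ a + Ψ b := by
      have : Ψ a + Ψ b = 2 * Ψ a := by rw [← hΨ]; ring
      rw [this]
      refine le_antisymm (by rw [← this]; exact hup) ?_
      rw [← hsm]; exact hmono1
    obtain ⟨c, hc, hbc⟩ := hstrict a b ha0 hb0 heq2
    have hΨa : Ψ a ≠ 0 := fun h => ha0 ((hdef a).mp h)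
    have : Ψ b = c * Ψ a := by rw [hbc, hsmul, abs_of_pos hc]
    have hc1 : c = 1 := by
      have := hΨ.trans this
      field_simp at this
      rcases mul_eq_mul_right_iff.mp (by linarith [this] : c * Ψ a = 1 * Ψ a) with h | h
      · exact h
      · exact absurd h hΨa
    rw [hbc, hc1, one_smul]

/-- If `Ψ` is a monotone norm on `ℝ²` with strictly convex unit
ball and `v ≤ v₁ + v₂` componentwise with `Ψ(v₁) + Ψ(v₂) = Ψ(v)`, then
`v₁ = λ₁ v`, `v₂ = λ₂ v` with `λ₁ + λ₂ = 1`, `λᵢ ≥ 0`. -/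
theorem stmt_13 (Ψ : (Fin 2 → ℝ) → ℝ)
    (hdef : ∀ x : Fin 2 → ℝ, Ψ x = 0 ↔ x = 0)
    (hadd : ∀ x y : Fin 2 → ℝ, Ψ (x + y) ≤ Ψ x + Ψ y)
    (hsmul : ∀ (c : ℝ) (x : Fin 2 → ℝ), Ψ (c • x) = |c| * Ψ x)
    (hstrict : ∀ x y : Fin 2 → ℝ, x ≠ 0 → y ≠ 0 → Ψ (x + y) = Ψ x + Ψ y →
      ∃ c : ℝ, 0 < c ∧ y = c • x)
    (hmono : ∀ p q : Fin 2 → ℝ, 0 ≤ q → q ≤ p → Ψ q ≤ Ψ p)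
    (v v₁ v₂ : Fin 2 → ℝ) (hv : 0 ≤ v) (hv₁ : 0 ≤ v₁) (hv₂ : 0 ≤ v₂)
    (hle : v ≤ v₁ + v₂) (heq : Ψ v₁ + Ψ v₂ = Ψ v) :
    ∃ l₁ l₂ : ℝ, 0 ≤ l₁ ∧ 0 ≤ l₂ ∧ l₁ + l₂ = 1 ∧ v₁ = l₁ • v ∧ v₂ = l₂ • v := by
  have hΨnn : ∀ x : Fin 2 → ℝ, 0 ≤ Ψ x := by
    intro x
    have h0 : Ψ (0 : Fin 2 → ℝ) = 0 := (hdef 0).mpr rfl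
    have hneg : Ψ (-x) = Ψ x := by
      have : -x = (-1 : ℝ) • x := by simp
      rw [this, hsmul]; norm_num
    have := hadd x (-x)
    simp only [add_neg_cancel, h0, hneg] at this
    linarith
  by_cases hv0 : v = 0
  · refine ⟨1, 0, zero_le_one, le_rfl, by ring, ?_, ?_⟩
    · have hΨv : Ψ v = 0 := (hdef v).mpr hv0
      have h1 : Ψ v₁ = 0 := by
        have := hΨnn v₁; have := hΨnn v₂; linarith
      rw [(hdef v₁).mp h1, hv0]; simp
    · have hΨv : Ψ v = 0 := (hdef v).mpr hv0
      have h2 : Ψ v₂ = 0 := by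
        have := hΨnn v₁; have := hΨnn v₂; linarith
      rw [(hdef v₂).mp h2, hv0]; simp
  · have hup : Ψ (v₁ + v₂) ≤ Ψ v₁ + Ψ v₂ := hadd v₁ v₂
    have hlow : Ψ v ≤ Ψ (v₁ + v₂) := hmono _ _ hv hle
    have hΨeq : Ψ v = Ψ (v₁ + v₂) := le_antisymm hlow (by linarith)
    have hsum : v = v₁ + v₂ :=
      stmt13_key Ψ hdef hadd hsmul hstrict hmono v (v₁ + v₂) hv hle hΨeq
    by_cases h1 : v₁ = 0
    · refine ⟨0, 1, le_rfl, zero_le_one, by ring, by rw [h1]; simp, ?_⟩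
      rw [one_smul, hsum, h1, zero_add]
    · by_cases h2 : v₂ = 0
      · refine ⟨1, 0, zero_le_one, le_rfl, by ring, ?_, by rw [h2]; simp⟩
        rw [one_smul, hsum, h2, add_zero]
      · have heq2 : Ψ (v₁ + v₂) = Ψ v₁ + Ψ v₂ := by linarith
        obtain ⟨c, hc, hbc⟩ := hstrict v₁ v₂ h1 h2 heq2
        have hvc : v = (1 + c) • v₁ := by
          rw [hsum, hbc, add_smul, one_smul]
        have h1c : (0:ℝ) < 1 + c := by linarith
        refine ⟨1/(1+c), c/(1+c), by positivity, by positivity, ?_, ?_, ?_⟩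
        · field_simp
        · rw [hvc, smul_smul]
          rw [div_mul_cancel₀ _ (ne_of_gt h1c)]
          · simp
        · rw [hbc, hvc, smul_smul, div_mul_cancel₀ _ (ne_of_gt h1c)]
end

section
/- Let Φ : [0,∞)² → [0,∞) be induced by a norm with strictly convex unit ball. If (X₁,d₁) and (X₂,d₂) are uniquely geodesic metric spaces, then (X₁ × X₂, d_Φ) is uniquely geodesic, and every geodesic in the product is of the form t ↦ (c₁(t), c₂(t)) where cᵢ are affinely reparameterized geodesics in Xᵢ. -/
/-- `γ : [0,1] → X` is a constant-speed geodesic from `x` to `y` with respect to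
the distance function `d`. -/
def IsConstSpeedGeodesic {X : Type*} (d : X → X → ℝ) (γ : ℝ → X) (x y : X) : Prop :=
  γ 0 = x ∧ γ 1 = y ∧
    ∀ s ∈ Set.Icc (0 : ℝ) 1, ∀ t ∈ Set.Icc (0 : ℝ) 1, d (γ s) (γ t) = |s - t| * d x y

/-- `(X, d)` is uniquely geodesic: any two points are joined by a geodesic which
is unique (on the parameter interval `[0,1]`). -/
def IsUniquelyGeodesicWith {X : Type*} (d : X → X → ℝ) : Prop :=
  ∀ x y : X, (∃ γ : ℝ → X, IsConstSpeedGeodesic d γ x y) ∧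
    ∀ γ γ' : ℝ → X, IsConstSpeedGeodesic d γ x y → IsConstSpeedGeodesic d γ' x y →
      ∀ t ∈ Set.Icc (0 : ℝ) 1, γ t = γ' t

section NormAux

variable (Φ : (Fin 2 → ℝ) → ℝ)

/-- scalar version of the norm -/
noncomputable def Nf : ℝ → ℝ → ℝ := fun a b => Φ ![|a|, |b|]

lemma vec_abs_eq (x : Fin 2 → ℝ) : (fun i => |x i|) = ![|x 0|, |x 1|] := by
  funext i; fin_cases i <;> simp

lemma Nf_eq_psi (x : Fin 2 → ℝ) : Φ (fun i => |x i|) = Nf Φ (x 0) (x 1) := by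
  rw [vec_abs_eq]; rfl

lemma Nf_abs (a b : ℝ) : Nf Φ |a| |b| = Nf Φ a b := by
  simp [Nf]

lemma Nf_neg_left (a b : ℝ) : Nf Φ (-a) b = Nf Φ a b := by
  simp [Nf]

lemma Nf_neg_right (a b : ℝ) : Nf Φ a (-b) = Nf Φ a b := by
  simp [Nf]

lemma Nf_nonneg (hpos : ∀ q : Fin 2 → ℝ, 0 ≤ q → 0 ≤ Φ q) (a b : ℝ) :
    0 ≤ Nf Φ a b := by
  apply hpos
  intro i; fin_cases i <;> simp [abs_nonneg]

lemma Nf_add (hadd : ∀ x y : Fin 2 → ℝ,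
      Φ (fun i => |(x + y) i|) ≤ Φ (fun i => |x i|) + Φ (fun i => |y i|))
    (a b c d : ℝ) : Nf Φ (a + c) (b + d) ≤ Nf Φ a b + Nf Φ c d := by
  have h := hadd ![a, b] ![c, d]
  rw [Nf_eq_psi Φ (![a,b] + ![c,d]), Nf_eq_psi Φ ![a,b], Nf_eq_psi Φ ![c,d]] at h
  simpa using h

lemma Nf_smul (hsmul : ∀ (c : ℝ) (x : Fin 2 → ℝ),
      Φ (fun i => |(c • x) i|) = |c| * Φ (fun i => |x i|))
    (c a b : ℝ) : Nf Φ (c * a) (c * b) = |c| * Nf Φ a b := by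
  have h := hsmul c ![a, b]
  rw [Nf_eq_psi Φ (c • ![a,b]), Nf_eq_psi Φ ![a,b]] at h
  simpa using h

lemma Nf_zero_iff (hdef : ∀ x : Fin 2 → ℝ, Φ (fun i => |x i|) = 0 ↔ x = 0)
    (a b : ℝ) : Nf Φ a b = 0 ↔ a = 0 ∧ b = 0 := by
  have h := hdef ![a, b]
  rw [Nf_eq_psi Φ ![a,b]] at h
  simp only [Matrix.cons_val_zero, Matrix.cons_val_one, Matrix.head_cons] at h
  rw [h]
  constructor
  · intro he
    constructor
    · have := congrFun he 0; simpa using this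
    · have := congrFun he 1; simpa using this
  · rintro ⟨rfl, rfl⟩
    funext i; fin_cases i <;> simp

lemma Nf_strict (hstrict : ∀ x y : Fin 2 → ℝ, x ≠ 0 → y ≠ 0 →
      Φ (fun i => |(x + y) i|) = Φ (fun i => |x i|) + Φ (fun i => |y i|) →
      ∃ c : ℝ, 0 < c ∧ y = c • x)
    (a b c d : ℝ) (h1 : ¬(a = 0 ∧ b = 0)) (h2 : ¬(c = 0 ∧ d = 0))
    (heq : Nf Φ (a + c) (b + d) = Nf Φ a b + Nf Φ c d) :
    ∃ k : ℝ, 0 < k ∧ c = k * a ∧ d = k * b := by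
  have hx : (![a, b] : Fin 2 → ℝ) ≠ 0 := by
    intro he
    exact h1 ⟨by simpa using congrFun he 0, by simpa using congrFun he 1⟩
  have hy : (![c, d] : Fin 2 → ℝ) ≠ 0 := by
    intro he
    exact h2 ⟨by simpa using congrFun he 0, by simpa using congrFun he 1⟩
  have heq' : Φ (fun i => |(![a,b] + ![c,d]) i|)
      = Φ (fun i => |(![a,b] : Fin 2 → ℝ) i|) + Φ (fun i => |(![c,d] : Fin 2 → ℝ) i|) := by
    rw [Nf_eq_psi Φ (![a,b] + ![c,d]), Nf_eq_psi Φ ![a,b], Nf_eq_psi Φ ![c,d]]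
    simpa using heq
  obtain ⟨k, hk, hkeq⟩ := hstrict ![a, b] ![c, d] hx hy heq'
  refine ⟨k, hk, ?_, ?_⟩
  · have := congrFun hkeq 0; simpa using this
  · have := congrFun hkeq 1; simpa using this

end NormAux

section MonoAux

variable (Φ : (Fin 2 → ℝ) → ℝ)
variable (hpos : ∀ q : Fin 2 → ℝ, 0 ≤ q → 0 ≤ Φ q)
variable (hdef : ∀ x : Fin 2 → ℝ, Φ (fun i => |x i|) = 0 ↔ x = 0)
variable (hadd : ∀ x y : Fin 2 → ℝ,
      Φ (fun i => |(x + y) i|) ≤ Φ (fun i => |x i|) + Φ (fun i => |y i|))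
variable (hsmul : ∀ (c : ℝ) (x : Fin 2 → ℝ),
      Φ (fun i => |(c • x) i|) = |c| * Φ (fun i => |x i|))
variable (hstrict : ∀ x y : Fin 2 → ℝ, x ≠ 0 → y ≠ 0 →
      Φ (fun i => |(x + y) i|) = Φ (fun i => |x i|) + Φ (fun i => |y i|) →
      ∃ c : ℝ, 0 < c ∧ y = c • x)

include hadd hsmul in
lemma Nf_mono_left (a a' b : ℝ) (ha : 0 ≤ a) (haa : a ≤ a') :
    Nf Φ a b ≤ Nf Φ a' b := by
  rcases eq_or_lt_of_le (le_trans ha haa) with h0 | h0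
  · have : a = a' := le_antisymm haa (by linarith)
    rw [this]
  · set l : ℝ := (a' + a) / (2 * a') with hl
    have hl0 : 0 ≤ l := by positivity
    have hl1 : l ≤ 1 := by
      rw [hl, div_le_one (by linarith)]; linarith
    have h1 : a = l * a' + (1 - l) * (-a') := by
      field_simp [hl]; linear_combination (-(a + a')) * mul_inv_cancel₀ (ne_of_gt h0)
    have h2 : b = l * b + (1 - l) * b := by ring
    calc Nf Φ a b = Nf Φ (l * a' + (1 - l) * (-a')) (l * b + (1 - l) * b) := by
            rw [← h1, ← h2]
      _ ≤ Nf Φ (l * a') (l * b) + Nf Φ ((1 - l) * (-a')) ((1 - l) * b) :=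
            Nf_add Φ hadd _ _ _ _
      _ = l * Nf Φ a' b + (1 - l) * Nf Φ (-a') b := by
            rw [Nf_smul Φ hsmul, Nf_smul Φ hsmul, abs_of_nonneg hl0,
              abs_of_nonneg (by linarith : (0:ℝ) ≤ 1 - l)]
      _ = Nf Φ a' b := by rw [Nf_neg_left]; ring

include hadd hsmul in
lemma Nf_mono_right (a b b' : ℝ) (hb : 0 ≤ b) (hbb : b ≤ b') :
    Nf Φ a b ≤ Nf Φ a b' := by
  rcases eq_or_lt_of_le (le_trans hb hbb) with h0 | h0
  · have : b = b' := le_antisymm hbb (by linarith)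
    rw [this]
  · set l : ℝ := (b' + b) / (2 * b') with hl
    have hl0 : 0 ≤ l := by positivity
    have hl1 : l ≤ 1 := by
      rw [hl, div_le_one (by linarith)]; linarith
    have h1 : b = l * b' + (1 - l) * (-b') := by
      field_simp [hl]; linear_combination (-(b + b')) * mul_inv_cancel₀ (ne_of_gt h0)
    have h2 : a = l * a + (1 - l) * a := by ring
    calc Nf Φ a b = Nf Φ (l * a + (1 - l) * a) (l * b' + (1 - l) * (-b')) := by
            rw [← h1, ← h2]
      _ ≤ Nf Φ (l * a) (l * b') + Nf Φ ((1 - l) * a) ((1 - l) * (-b')) :=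
            Nf_add Φ hadd _ _ _ _
      _ = l * Nf Φ a b' + (1 - l) * Nf Φ a (-b') := by
            rw [Nf_smul Φ hsmul, Nf_smul Φ hsmul, abs_of_nonneg hl0,
              abs_of_nonneg (by linarith : (0:ℝ) ≤ 1 - l)]
      _ = Nf Φ a b' := by rw [Nf_neg_right]; ring

include hadd hsmul in
lemma Nf_mono (a a' b b' : ℝ) (ha : 0 ≤ a) (hb : 0 ≤ b)
    (haa : a ≤ a') (hbb : b ≤ b') : Nf Φ a b ≤ Nf Φ a' b' :=
  le_trans (Nf_mono_left Φ hadd hsmul a a' b ha haa)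
    (Nf_mono_right Φ hadd hsmul a' b b' hb hbb)

include hpos hdef hadd hsmul hstrict in
lemma Nf_strictMono (a a' b b' : ℝ) (ha : 0 ≤ a) (hb : 0 ≤ b)
    (haa : a ≤ a') (hbb : b ≤ b') (heq : Nf Φ a b = Nf Φ a' b') :
    a = a' ∧ b = b' := by
  rcases eq_or_lt_of_le (Nf_nonneg Φ hpos a b) with hr | hr
  · -- N a b = 0
    obtain ⟨ha0, hb0⟩ := (Nf_zero_iff Φ hdef a b).mp hr.symm
    obtain ⟨ha0', hb0'⟩ := (Nf_zero_iff Φ hdef a' b').mp (heq ▸ hr.symm)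
    exact ⟨ha0.trans ha0'.symm, hb0.trans hb0'.symm⟩
  · have h1 : ¬(a = 0 ∧ b = 0) := by
      rintro ⟨rfl, rfl⟩
      rw [(Nf_zero_iff Φ hdef 0 0).mpr ⟨rfl, rfl⟩] at hr; exact lt_irrefl 0 hr
    have h2 : ¬(a' = 0 ∧ b' = 0) := by
      rintro ⟨rfl, rfl⟩
      rw [heq, (Nf_zero_iff Φ hdef 0 0).mpr ⟨rfl, rfl⟩] at hr; exact lt_irrefl 0 hr
    have hmid : Nf Φ (a + a') (b + b') = Nf Φ a b + Nf Φ a' b' := by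
      have hle : Nf Φ (a + a') (b + b') ≤ Nf Φ a b + Nf Φ a' b' := Nf_add Φ hadd _ _ _ _
      have h2eq : Nf Φ (a + a') (b + b') = 2 * Nf Φ ((a + a')/2) ((b + b')/2) := by
        have := Nf_smul Φ hsmul 2 ((a + a')/2) ((b + b')/2)
        rw [abs_of_nonneg (by norm_num : (0:ℝ) ≤ 2)] at this
        have e1 : 2 * ((a + a')/2) = a + a' := by ring
        have e2 : 2 * ((b + b')/2) = b + b' := by ring
        rw [e1, e2] at this
        exact this
      have hge : Nf Φ a b ≤ Nf Φ ((a + a')/2) ((b + b')/2) :=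
        Nf_mono Φ hadd hsmul a ((a + a')/2) b ((b + b')/2) ha hb
          (by linarith) (by linarith)
      rw [← heq] at hle ⊢
      linarith [h2eq, hge]
    obtain ⟨k, hk, hka, hkb⟩ := Nf_strict Φ hstrict a b a' b' h1 h2 hmid
    have : Nf Φ a' b' = k * Nf Φ a b := by
      rw [hka, hkb, Nf_smul Φ hsmul, abs_of_pos hk]
    have hk1 : k = 1 := by
      rw [← heq] at this
      have : (k - 1) * Nf Φ a b = 0 := by linarith
      rcases mul_eq_zero.mp this with h | h
      · linarith
      · exfalso; rw [h] at hr; exact lt_irrefl 0 hr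
    rw [hk1, one_mul] at hka hkb
    exact ⟨hka.symm, hkb.symm⟩

end MonoAux

section MainAux

variable (Φ : (Fin 2 → ℝ) → ℝ)
variable (hpos : ∀ q : Fin 2 → ℝ, 0 ≤ q → 0 ≤ Φ q)
variable (hdef : ∀ x : Fin 2 → ℝ, Φ (fun i => |x i|) = 0 ↔ x = 0)
variable (hadd : ∀ x y : Fin 2 → ℝ,
      Φ (fun i => |(x + y) i|) ≤ Φ (fun i => |x i|) + Φ (fun i => |y i|))
variable (hsmul : ∀ (c : ℝ) (x : Fin 2 → ℝ),
      Φ (fun i => |(c • x) i|) = |c| * Φ (fun i => |x i|))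
variable (hstrict : ∀ x y : Fin 2 → ℝ, x ≠ 0 → y ≠ 0 →
      Φ (fun i => |(x + y) i|) = Φ (fun i => |x i|) + Φ (fun i => |y i|) →
      ∃ c : ℝ, 0 < c ∧ y = c • x)

lemma Nf_of_nonneg (a b : ℝ) (ha : 0 ≤ a) (hb : 0 ≤ b) :
    Φ ![a, b] = Nf Φ a b := by
  simp [Nf, abs_of_nonneg ha, abs_of_nonneg hb]

include hpos hdef hadd hsmul hstrict in
lemma comp_geodesic {X₁ X₂ : Type*} [MetricSpace X₁] [MetricSpace X₂]
    (p q : X₁ × X₂) (γ : ℝ → X₁ × X₂)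
    (hγ : IsConstSpeedGeodesic
      (fun p q : X₁ × X₂ => Φ ![dist p.1 q.1, dist p.2 q.2]) γ p q) :
    IsConstSpeedGeodesic (fun a b : X₁ => dist a b) (fun t => (γ t).1) p.1 q.1 ∧
    IsConstSpeedGeodesic (fun a b : X₂ => dist a b) (fun t => (γ t).2) p.2 q.2 := by
  obtain ⟨h0, h1, hG⟩ := hγ
  set A := dist p.1 q.1 with hA
  set B := dist p.2 q.2 with hB
  set R := Nf Φ A B with hR
  have hGN : ∀ s ∈ Set.Icc (0:ℝ) 1, ∀ t ∈ Set.Icc (0:ℝ) 1,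
      Nf Φ (dist (γ s).1 (γ t).1) (dist (γ s).2 (γ t).2) = |s - t| * R := by
    intro s hs t ht
    have h : Φ ![dist (γ s).1 (γ t).1, dist (γ s).2 (γ t).2]
        = |s - t| * Φ ![dist p.1 q.1, dist p.2 q.2] := hG s hs t ht
    rwa [Nf_of_nonneg Φ _ _ dist_nonneg dist_nonneg,
      Nf_of_nonneg Φ _ _ dist_nonneg dist_nonneg] at h
  have hRnn : 0 ≤ R := Nf_nonneg Φ hpos A B
  -- Step A : distances from the start point grow linearly, coordinatewise
  have stepA : ∀ t ∈ Set.Icc (0:ℝ) 1,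
      dist p.1 (γ t).1 = t * A ∧ dist p.2 (γ t).2 = t * B := by
    intro t ht
    obtain ⟨ht0, ht1⟩ := ht
    set a := dist p.1 (γ t).1 with ha
    set b := dist p.2 (γ t).2 with hb
    set c := dist (γ t).1 q.1 with hc
    set d := dist (γ t).2 q.2 with hd
    have hv : Nf Φ a b = t * R := by
      have := hGN 0 ⟨le_refl 0, zero_le_one⟩ t ⟨ht0, ht1⟩
      rw [h0] at this
      rwa [show |(0:ℝ) - t| = t by rw [abs_sub_comm]; simpa using abs_of_nonneg ht0] at this
    have hw : Nf Φ c d = (1 - t) * R := by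
      have := hGN t ⟨ht0, ht1⟩ 1 ⟨zero_le_one, le_refl 1⟩
      rw [h1] at this
      rwa [show |t - 1| = 1 - t by rw [abs_sub_comm]; exact abs_of_nonneg (by linarith)] at this
    rcases eq_or_lt_of_le hRnn with hR0 | hRpos
    · -- degenerate case R = 0
      obtain ⟨hA0, hB0⟩ := (Nf_zero_iff Φ hdef A B).mp hR0.symm
      have hv0 : Nf Φ a b = 0 := by rw [hv, ← hR0]; ring
      obtain ⟨ha0, hb0⟩ := (Nf_zero_iff Φ hdef a b).mp hv0
      constructor
      · rw [ha0, hA0]; ring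
      · rw [hb0, hB0]; ring
    · rcases eq_or_lt_of_le ht0 with rfl | htpos
      · constructor <;> simp [ha, hb, h0]
      rcases eq_or_lt_of_le ht1 with rfl | htlt
      · constructor
        · rw [ha, h1, ← hA]; ring
        · rw [hb, h1, ← hB]; ring
      -- interior case 0 < t < 1
      have hvne : ¬(a = 0 ∧ b = 0) := by
        intro hab
        have : Nf Φ a b = 0 := (Nf_zero_iff Φ hdef a b).mpr hab
        rw [hv] at this; nlinarith
      have hwne : ¬(c = 0 ∧ d = 0) := by
        intro hcd
        have : Nf Φ c d = 0 := (Nf_zero_iff Φ hdef c d).mpr hcd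
        rw [hw] at this; nlinarith
      have htriA : A ≤ a + c := by rw [hA, ha, hc]; exact dist_triangle _ _ _
      have htriB : B ≤ b + d := by rw [hB, hb, hd]; exact dist_triangle _ _ _
      have hmid : Nf Φ (a + c) (b + d) = Nf Φ a b + Nf Φ c d := by
        have hle := Nf_add Φ hadd a b c d
        have hge : R ≤ Nf Φ (a + c) (b + d) :=
          Nf_mono Φ hadd hsmul A (a + c) B (b + d) dist_nonneg dist_nonneg htriA htriB
        rw [hv, hw]
        have : Nf Φ a b + Nf Φ c d = R := by rw [hv, hw]; ring
        linarith [hle, hge, this]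
      obtain ⟨k, hk, hka, hkb⟩ := Nf_strict Φ hstrict a b c d hvne hwne hmid
      have hkt : (1 - t) * R = k * (t * R) := by
        have : Nf Φ c d = k * Nf Φ a b := by
          rw [hka, hkb, Nf_smul Φ hsmul, abs_of_pos hk]
        rw [hv, hw] at this
        exact this
      have hkeq : k * t = 1 - t := by
        have hRne : R ≠ 0 := ne_of_gt hRpos
        have h' : (1 - t) * R = (k * t) * R := by linear_combination hkt
        exact (mul_right_cancel₀ hRne h').symm
      have hsum : Nf Φ (a + c) (b + d) = R := by
        have hac : a + c = (1 + k) * a := by rw [hka]; ring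
        have hbd : b + d = (1 + k) * b := by rw [hkb]; ring
        rw [hac, hbd, Nf_smul Φ hsmul, abs_of_pos (by linarith : (0:ℝ) < 1 + k), hv]
        linear_combination R * hkeq
      have hAB := Nf_strictMono Φ hpos hdef hadd hsmul hstrict A (a + c) B (b + d)
        dist_nonneg dist_nonneg htriA htriB (by rw [hsum])
      obtain ⟨hAeq, hBeq⟩ := hAB
      constructor
      · -- a = t * A
        have hAa : A = (1 + k) * a := by rw [hAeq, hka]; ring
        linear_combination (-t) * hAa + (-a) * hkeq
      · have hBb : B = (1 + k) * b := by rw [hBeq, hkb]; ring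
        linear_combination (-t) * hBb + (-b) * hkeq
  -- Step B, ordered version
  have stepB' : ∀ s ∈ Set.Icc (0:ℝ) 1, ∀ t ∈ Set.Icc (0:ℝ) 1, s ≤ t →
      dist (γ s).1 (γ t).1 = |s - t| * A ∧ dist (γ s).2 (γ t).2 = |s - t| * B := by
    intro s hs t ht hst
    set u := t - s with hu
    have hu0 : 0 ≤ u := by simp [hu]; linarith
    have habs : |s - t| = u := by rw [abs_sub_comm]; exact abs_of_nonneg hu0
    set a := dist (γ s).1 (γ t).1 with ha
    set b := dist (γ s).2 (γ t).2 with hb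
    have hN : Nf Φ a b = u * R := by rw [← habs]; exact hGN s hs t ht
    have hNu : Nf Φ (u * A) (u * B) = u * R := by
      rw [Nf_smul Φ hsmul, abs_of_nonneg hu0, hR]
    have hlowA : u * A ≤ a := by
      have h1' := (stepA s hs).1
      have h2' := (stepA t ht).1
      have htr : dist p.1 (γ t).1 ≤ dist p.1 (γ s).1 + a := dist_triangle _ _ _
      rw [h1', h2'] at htr
      have he : u * A = t * A - s * A := by rw [hu]; ring
      linarith [htr, he]
    have hlowB : u * B ≤ b := by
      have h1' := (stepA s hs).2
      have h2' := (stepA t ht).2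
      have htr : dist p.2 (γ t).2 ≤ dist p.2 (γ s).2 + b := dist_triangle _ _ _
      rw [h1', h2'] at htr
      have he : u * B = t * B - s * B := by rw [hu]; ring
      linarith [htr, he]
    have := Nf_strictMono Φ hpos hdef hadd hsmul hstrict (u * A) a (u * B) b
      (by positivity) (by positivity) hlowA hlowB (by rw [hN, hNu])
    exact ⟨by rw [habs, ← this.1], by rw [habs, ← this.2]⟩
  have stepB : ∀ s ∈ Set.Icc (0:ℝ) 1, ∀ t ∈ Set.Icc (0:ℝ) 1,
      dist (γ s).1 (γ t).1 = |s - t| * A ∧ dist (γ s).2 (γ t).2 = |s - t| * B := by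
    intro s hs t ht
    rcases le_total s t with hst | hts
    · exact stepB' s hs t ht hst
    · have h := stepB' t ht s hs hts
      rw [dist_comm ((γ t).1), dist_comm ((γ t).2), abs_sub_comm t s] at h
      exact h
  refine ⟨⟨?_, ?_, fun s hs t ht => (stepB s hs t ht).1⟩,
          ⟨?_, ?_, fun s hs t ht => (stepB s hs t ht).2⟩⟩
  · show (γ 0).1 = p.1; rw [h0]
  · show (γ 1).1 = q.1; rw [h1]
  · show (γ 0).2 = p.2; rw [h0]
  · show (γ 1).2 = q.2; rw [h1]

end MainAux

/-- If `Φ` is induced by a norm with strictly convex unit ball and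
`X₁`, `X₂` are uniquely geodesic, then `(X₁ × X₂, d_Φ)` is uniquely geodesic and
every geodesic of the product has components which are constant-speed
(affinely reparameterized) geodesics of the factors. -/
theorem stmt_14 {X₁ X₂ : Type*} [MetricSpace X₁] [MetricSpace X₂]
    (Φ : (Fin 2 → ℝ) → ℝ)
    (hpos : ∀ q : Fin 2 → ℝ, 0 ≤ q → 0 ≤ Φ q)
    (hdef : ∀ x : Fin 2 → ℝ, Φ (fun i => |x i|) = 0 ↔ x = 0)
    (hadd : ∀ x y : Fin 2 → ℝ,
      Φ (fun i => |(x + y) i|) ≤ Φ (fun i => |x i|) + Φ (fun i => |y i|))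
    (hsmul : ∀ (c : ℝ) (x : Fin 2 → ℝ),
      Φ (fun i => |(c • x) i|) = |c| * Φ (fun i => |x i|))
    (hstrict : ∀ x y : Fin 2 → ℝ, x ≠ 0 → y ≠ 0 →
      Φ (fun i => |(x + y) i|) = Φ (fun i => |x i|) + Φ (fun i => |y i|) →
      ∃ c : ℝ, 0 < c ∧ y = c • x)
    (h₁ : IsUniquelyGeodesicWith (fun a b : X₁ => dist a b))
    (h₂ : IsUniquelyGeodesicWith (fun a b : X₂ => dist a b)) :
    IsUniquelyGeodesicWith
      (fun p q : X₁ × X₂ => Φ ![dist p.1 q.1, dist p.2 q.2]) ∧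
    ∀ (p q : X₁ × X₂) (γ : ℝ → X₁ × X₂),
      IsConstSpeedGeodesic (fun p q : X₁ × X₂ => Φ ![dist p.1 q.1, dist p.2 q.2]) γ p q →
      (IsConstSpeedGeodesic (fun a b : X₁ => dist a b) (fun t => (γ t).1) p.1 q.1 ∧
       IsConstSpeedGeodesic (fun a b : X₂ => dist a b) (fun t => (γ t).2) p.2 q.2) := by
  constructor
  · intro p q
    obtain ⟨⟨γ₁, hγ₁⟩, hu₁⟩ := h₁ p.1 q.1
    obtain ⟨⟨γ₂, hγ₂⟩, hu₂⟩ := h₂ p.2 q.2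
    constructor
    · refine ⟨fun t => (γ₁ t, γ₂ t), ?_, ?_, ?_⟩
      · show (γ₁ 0, γ₂ 0) = p
        exact Prod.ext hγ₁.1 hγ₂.1
      · show (γ₁ 1, γ₂ 1) = q
        exact Prod.ext hγ₁.2.1 hγ₂.2.1
      · intro s hs t ht
        show Φ ![dist (γ₁ s) (γ₁ t), dist (γ₂ s) (γ₂ t)]
          = |s - t| * Φ ![dist p.1 q.1, dist p.2 q.2]
        have e1 : dist (γ₁ s) (γ₁ t) = |s - t| * dist p.1 q.1 := hγ₁.2.2 s hs t ht
        have e2 : dist (γ₂ s) (γ₂ t) = |s - t| * dist p.2 q.2 := hγ₂.2.2 s hs t ht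
        rw [e1, e2, Nf_of_nonneg Φ _ _ (by positivity) (by positivity),
          Nf_of_nonneg Φ _ _ dist_nonneg dist_nonneg, Nf_smul Φ hsmul, abs_abs]
    · intro γ γ' hγ hγ' t ht
      obtain ⟨hc1, hc2⟩ := comp_geodesic Φ hpos hdef hadd hsmul hstrict p q γ hγ
      obtain ⟨hc1', hc2'⟩ := comp_geodesic Φ hpos hdef hadd hsmul hstrict p q γ' hγ'
      have e1 := hu₁ _ _ hc1 hc1' t ht
      have e2 := hu₂ _ _ hc2 hc2' t ht
      exact Prod.ext e1 e2
  · intro p q γ hγ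
    exact comp_geodesic Φ hpos hdef hadd hsmul hstrict p q γ hγ
end

section
/- Let A be an affine space over a normed vector space (V,|·|), Φ : [0,∞)^n → [0,∞) satisfy conditions (1)–(4) with the associated Ψ having strictly convex unit ball, and let φ : A → (∏Xᵢ, d_Φ) be an isometric embedding with components φᵢ. Define αᵢ(a,v) = dᵢ(φᵢ(a), φᵢ(a+v)). Then αᵢ(a,v) = αᵢ(a+v,v) for all a ∈ A, v ∈ V and all i. -/
/-- For an isometric embedding `φ` of a normed affine space `A`
into a `Φ`-product (with `Ψ` strictly convex), the quantities
`αᵢ(a,v) = dᵢ(φᵢ(a), φᵢ(a+v))` satisfy `αᵢ(a,v) = αᵢ(a+v,v)`. -/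
theorem stmt_15 {n : ℕ} (Φ : (Fin n → ℝ) → ℝ)
    (hpos : ∀ q : Fin n → ℝ, 0 ≤ q → 0 ≤ Φ q)
    (hdef : ∀ q : Fin n → ℝ, 0 ≤ q → (Φ q = 0 ↔ q = 0))
    (hmono : ∀ p q : Fin n → ℝ, 0 ≤ q → q ≤ p → Φ q ≤ Φ p)
    (hsub : ∀ p q : Fin n → ℝ, 0 ≤ p → 0 ≤ q → Φ (p + q) ≤ Φ p + Φ q)
    (hhom : ∀ (l : ℝ) (q : Fin n → ℝ), 0 ≤ l → 0 ≤ q → Φ (l • q) = l * Φ q)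
    (hstrict : ∀ x y : Fin n → ℝ, 0 ≤ x → 0 ≤ y → x ≠ 0 → y ≠ 0 →
      Φ (x + y) = Φ x + Φ y → ∃ c : ℝ, 0 < c ∧ y = c • x)
    (V : Type*) [NormedAddCommGroup V] [NormedSpace ℝ V]
    (A : Type*) [AddTorsor V A]
    (X : Fin n → Type*) [∀ i, MetricSpace (X i)]
    (φ : A → ∀ i, X i)
    (hiso : ∀ a b : A, Φ (fun i => dist (φ a i) (φ b i)) = ‖b -ᵥ a‖) :
    ∀ (a : A) (v : V) (i : Fin n),
      dist (φ a i) (φ (v +ᵥ a) i) = dist (φ (v +ᵥ a) i) (φ (v +ᵥ (v +ᵥ a)) i) := by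
  intro a v i
  by_cases hv : v = 0
  · simp [hv]
  set b := v +ᵥ a with hb
  set c := v +ᵥ b with hc
  set x : Fin n → ℝ := fun i => dist (φ a i) (φ b i) with hx
  set y : Fin n → ℝ := fun i => dist (φ b i) (φ c i) with hy
  have hx0 : (0:Fin n → ℝ) ≤ x := fun i => dist_nonneg
  have hy0 : (0:Fin n → ℝ) ≤ y := fun i => dist_nonneg
  have hΦx : Φ x = ‖v‖ := by rw [hx, hiso a b, hb, vadd_vsub]
  have hΦy : Φ y = ‖v‖ := by rw [hy, hiso b c, hc, vadd_vsub]
  have hΦz : Φ (fun i => dist (φ a i) (φ c i)) = 2 * ‖v‖ := by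
    rw [hiso a c]
    have h1 : c -ᵥ a = v + v := by rw [hc, hb, vadd_vsub_assoc, vadd_vsub]
    rw [h1, show v + v = (2:ℝ) • v from (two_smul ℝ v).symm, norm_smul]
    norm_num
  have hge : 2 * ‖v‖ ≤ Φ (x + y) := by
    rw [← hΦz]
    exact hmono _ _ (fun i => dist_nonneg) (fun i => dist_triangle _ _ _)
  have heq : Φ (x + y) = Φ x + Φ y :=
    le_antisymm (hsub x y hx0 hy0) (by rw [hΦx, hΦy]; linarith)
  have hvn : ‖v‖ ≠ 0 := norm_ne_zero_iff.mpr hv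
  have hxne : x ≠ 0 := fun h => hvn (by rw [← hΦx]; exact (hdef x hx0).mpr h)
  have hyne : y ≠ 0 := fun h => hvn (by rw [← hΦy]; exact (hdef y hy0).mpr h)
  obtain ⟨k, hk, hyx⟩ := hstrict x y hx0 hy0 hxne hyne heq
  have : ‖v‖ = k * ‖v‖ := by
    calc ‖v‖ = Φ y := hΦy.symm
    _ = Φ (k • x) := by rw [hyx]
    _ = k * Φ x := hhom k x hk.le hx0
    _ = k * ‖v‖ := by rw [hΦx]
  have hk1 : k = 1 := by
    have h2 : k * ‖v‖ = 1 * ‖v‖ := by linarith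
    exact mul_right_cancel₀ hvn h2
  rw [hk1, one_smul] at hyx
  exact (congrFun hyx i).symm
end

section
/- In the setting of the previous statement (isometric embedding φ of a normed affine space into a Φ-product with Ψ strictly convex), the quantities αᵢ(a,v) = dᵢ(φᵢ(a),φᵢ(a+v)) are independent of the base point a, positively homogeneous in v (αᵢ(a,tv) = |t|αᵢ(a,v)), and subadditive in v; consequently v ↦ αᵢ(v) is a pseudonorm on V and φᵢ : (V,αᵢ) → (Xᵢ,dᵢ) is isometric, with |v| = Φ(α₁(v),...,αₙ(v)) for all v. -/
/-- For an isometric embedding `φ` of a normed affine space into a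
`Φ`-product (with `Ψ` strictly convex), the quantities
`αᵢ(a,v) = dᵢ(φᵢ(a), φᵢ(a+v))` are independent of the base point, positively
homogeneous and subadditive in `v` (hence pseudonorms), `φᵢ` is isometric from
`(V, αᵢ)` to `(Xᵢ, dᵢ)`, and `‖v‖ = Φ(α₁(v),...,αₙ(v))`. -/
theorem stmt_16 {n : ℕ} (Φ : (Fin n → ℝ) → ℝ)
    (hpos : ∀ q : Fin n → ℝ, 0 ≤ q → 0 ≤ Φ q)
    (hdef : ∀ q : Fin n → ℝ, 0 ≤ q → (Φ q = 0 ↔ q = 0))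
    (hmono : ∀ p q : Fin n → ℝ, 0 ≤ q → q ≤ p → Φ q ≤ Φ p)
    (hsub : ∀ p q : Fin n → ℝ, 0 ≤ p → 0 ≤ q → Φ (p + q) ≤ Φ p + Φ q)
    (hhom : ∀ (l : ℝ) (q : Fin n → ℝ), 0 ≤ l → 0 ≤ q → Φ (l • q) = l * Φ q)
    (hstrict : ∀ x y : Fin n → ℝ, 0 ≤ x → 0 ≤ y → x ≠ 0 → y ≠ 0 →
      Φ (x + y) = Φ x + Φ y → ∃ c : ℝ, 0 < c ∧ y = c • x)
    (V : Type*) [NormedAddCommGroup V] [NormedSpace ℝ V]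
    (A : Type*) [AddTorsor V A]
    (X : Fin n → Type*) [∀ i, MetricSpace (X i)]
    (φ : A → ∀ i, X i)
    (hiso : ∀ a b : A, Φ (fun i => dist (φ a i) (φ b i)) = ‖b -ᵥ a‖) :
    (∀ (a b : A) (v : V) (i : Fin n),
      dist (φ a i) (φ (v +ᵥ a) i) = dist (φ b i) (φ (v +ᵥ b) i)) ∧
    (∀ (a : A) (t : ℝ) (v : V) (i : Fin n),
      dist (φ a i) (φ (t • v +ᵥ a) i) = |t| * dist (φ a i) (φ (v +ᵥ a) i)) ∧
    (∀ (a : A) (v w : V) (i : Fin n),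
      dist (φ a i) (φ ((v + w) +ᵥ a) i) ≤
        dist (φ a i) (φ (v +ᵥ a) i) + dist (φ a i) (φ (w +ᵥ a) i)) ∧
    (∀ (a b : A) (i : Fin n),
      dist (φ a i) (φ b i) = dist (φ a i) (φ ((b -ᵥ a) +ᵥ a) i)) ∧
    (∀ (a : A) (v : V), Φ (fun i => dist (φ a i) (φ (v +ᵥ a) i)) = ‖v‖) := by
  classical
  -- abbreviation
  set α : A → V → Fin n → ℝ := fun a v i => dist (φ a i) (φ (v +ᵥ a) i) with hαdef
  have hα0 : ∀ a v, (0 : Fin n → ℝ) ≤ α a v := fun a v i => dist_nonneg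
  have hΦα : ∀ a v, Φ (α a v) = ‖v‖ := by
    intro a v
    have := hiso a (v +ᵥ a)
    simpa [vadd_vsub] using this
  have hΦ0 : Φ 0 = 0 := (hdef 0 le_rfl).mpr rfl
  have hαzero : ∀ a, α a (0 : V) = 0 := by
    intro a; funext i; simp [hαdef]
  -- positivity of Φ on nonzero nonnegative vectors
  have hΦpos : ∀ q : Fin n → ℝ, 0 ≤ q → q ≠ 0 → 0 < Φ q := by
    intro q hq hq0
    refine lt_of_le_of_ne (hpos q hq) ?_
    intro h
    exact hq0 ((hdef q hq).mp h.symm)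
  -- strict monotonicity
  have hsm : ∀ p q : Fin n → ℝ, 0 ≤ q → q ≤ p → Φ q = Φ p → q = p := by
    intro p q hq hqp hΦeq
    have hp : (0 : Fin n → ℝ) ≤ p := le_trans hq hqp
    by_cases hq0 : q = 0
    · subst hq0
      have : Φ p = 0 := by rw [← hΦeq, hΦ0]
      exact ((hdef p hp).mp this).symm
    · have hp0 : p ≠ 0 := by
        rintro rfl
        exact hq0 (le_antisymm hqp hq)
      have h2q : Φ (q + q) = Φ q + Φ q := by
        rw [← two_smul ℝ q, hhom 2 q (by norm_num) hq]; ring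
      have hle1 : Φ q + Φ p ≤ Φ (q + p) := by
        rw [← hΦeq, ← h2q]
        exact hmono (q + p) (q + q) (add_nonneg hq hq) (add_le_add le_rfl hqp)
      have heq : Φ (q + p) = Φ q + Φ p := le_antisymm (hsub q p hq hp) hle1
      obtain ⟨c, hc, hpc⟩ := hstrict q p hq hp hq0 hp0 heq
      have hΦp : Φ p = c * Φ q := by rw [hpc, hhom c q hc.le hq]
      have hΦqpos : 0 < Φ q := hΦpos q hq hq0
      have hc1 : c = 1 := by
        have h9 : Φ q = c * Φ q := hΦeq.trans hΦp
        nlinarith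
      rw [hpc, hc1, one_smul]
  -- triangle inequality componentwise
  have htri : ∀ (a : A) (v w : V), α a (v + w) ≤ α a v + α (v +ᵥ a) w := by
    intro a v w i
    have h1 : (v + w) +ᵥ a = w +ᵥ (v +ᵥ a) := by
      rw [add_comm, add_vadd]
    simp only [hαdef, h1, Pi.add_apply]
    exact dist_triangle _ (φ (v +ᵥ a) i) _
  -- scaling for 0 < t < 1
  have hscale1 : ∀ (a : A) (v : V) (t : ℝ), 0 < t → t < 1 →
      α a (t • v) = t • α a v := by
    intro a v t ht ht1
    by_cases hv : v = 0
    · subst hv; simp [hαzero, smul_zero]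
    have hvn : (0:ℝ) < ‖v‖ := norm_pos_iff.mpr hv
    set x := α a (t • v) with hx
    set y := α ((t • v) +ᵥ a) ((1 - t) • v) with hy
    set q := α a v with hq
    have hsplit : t • v + (1 - t) • v = v := by
      rw [← add_smul]; ring_nf; rw [one_smul]
    have hqle : q ≤ x + y := by
      have := htri a (t • v) ((1 - t) • v)
      rwa [hsplit] at this
    have hΦx : Φ x = t * ‖v‖ := by
      rw [hx, hΦα, norm_smul, Real.norm_eq_abs, abs_of_pos ht]
    have hΦy : Φ y = (1 - t) * ‖v‖ := by
      rw [hy, hΦα, norm_smul, Real.norm_eq_abs, abs_of_pos (by linarith)]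
    have hΦxy_le : Φ (x + y) ≤ ‖v‖ := by
      have := hsub x y (hα0 _ _) (hα0 _ _)
      rw [hΦx, hΦy] at this; linarith
    have hΦq : Φ q = ‖v‖ := hΦα a v
    have hΦxy_ge : ‖v‖ ≤ Φ (x + y) := by
      rw [← hΦq]
      exact hmono (x + y) q (hα0 _ _) hqle
    have hΦxy : Φ (x + y) = Φ x + Φ y := by
      rw [hΦx, hΦy]; linarith
    have hqeq : q = x + y := hsm (x + y) q (hα0 _ _) hqle (by linarith)
    have hx0 : x ≠ 0 := by
      intro h
      have : Φ x = 0 := by rw [h, hΦ0]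
      rw [hΦx] at this; nlinarith
    have hy0 : y ≠ 0 := by
      intro h
      have : Φ y = 0 := by rw [h, hΦ0]
      rw [hΦy] at this; nlinarith
    obtain ⟨c, hc, hyc⟩ := hstrict x y (hα0 _ _) (hα0 _ _) hx0 hy0 hΦxy
    have hq1c : q = (1 + c) • x := by
      rw [hqeq, hyc, add_smul, one_smul]
    have h5 : Φ q = (1 + c) * (t * ‖v‖) := by
      rw [hq1c, hhom (1 + c) x (by linarith) (hα0 _ _), hΦx]
    have hΦq1c : ‖v‖ = (1 + c) * (t * ‖v‖) := hΦq.symm.trans h5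
    have hct : (1 + c) * t = 1 := by
      have h6 : ((1 + c) * t) * ‖v‖ = 1 * ‖v‖ := by
        rw [one_mul, mul_assoc]; exact hΦq1c.symm
      exact mul_right_cancel₀ (ne_of_gt hvn) h6
    rw [hq1c, smul_smul, mul_comm t, hct, one_smul]
  -- scaling for all positive t
  have hscalep : ∀ (a : A) (v : V) (t : ℝ), 0 < t → α a (t • v) = t • α a v := by
    intro a v t ht
    rcases lt_trichotomy t 1 with h | h | h
    · exact hscale1 a v t ht h
    · subst h; simp
    · have hinv : (0:ℝ) < t⁻¹ := inv_pos.mpr ht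
      have hinv1 : t⁻¹ < 1 := by
        rw [inv_lt_one_iff₀]; right; exact h
      have := hscale1 a (t • v) t⁻¹ hinv hinv1
      rw [smul_smul, inv_mul_cancel₀ (ne_of_gt ht), one_smul] at this
      rw [this, smul_smul, mul_inv_cancel₀ (ne_of_gt ht), one_smul]
  -- componentwise bound on distances
  have hE : ∀ i : Fin n, 0 < Φ (Pi.single i 1) := by
    intro i
    refine hΦpos _ (fun j => ?_) ?_
    · by_cases hj : j = i <;> simp [Pi.single_apply, hj]
    · intro h
      have := congrFun h i
      simp [Pi.single_apply] at this
  have hcomp : ∀ (a b : A) (i : Fin n),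
      dist (φ a i) (φ b i) ≤ ‖b -ᵥ a‖ / Φ (Pi.single i 1) := by
    intro a b i
    rw [le_div_iff₀ (hE i)]
    have h1 : dist (φ a i) (φ b i) • (Pi.single i 1 : Fin n → ℝ) ≤
        fun j => dist (φ a j) (φ b j) := by
      intro j
      by_cases hj : j = i
      · subst hj; simp [Pi.single_apply]
      · simp [Pi.single_apply, hj, dist_nonneg]
    have h2 : Φ (dist (φ a i) (φ b i) • (Pi.single i 1 : Fin n → ℝ)) =
        dist (φ a i) (φ b i) * Φ (Pi.single i 1) := by
      refine hhom _ _ dist_nonneg (fun j => ?_)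
      by_cases hj : j = i <;> simp [Pi.single_apply, hj]
    calc dist (φ a i) (φ b i) * Φ (Pi.single i 1)
        = Φ (dist (φ a i) (φ b i) • (Pi.single i 1 : Fin n → ℝ)) := h2.symm
      _ ≤ Φ (fun j => dist (φ a j) (φ b j)) := by
          refine hmono _ _ (fun j => ?_) h1
          by_cases hj : j = i <;> simp [Pi.single_apply, hj, dist_nonneg]
      _ = ‖b -ᵥ a‖ := hiso a b
  -- base point independence
  have hbase : ∀ (a b : A) (v : V), α a v = α b v := by
    have key : ∀ (a b : A) (v : V) (i : Fin n), α a v i ≤ α b v i := by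
      intro a b v i
      set M : ℝ := ‖b -ᵥ a‖ / Φ (Pi.single i 1) with hM
      have hMnn : 0 ≤ M := div_nonneg (norm_nonneg _) (hE i).le
      have hk : ∀ k : ℕ, α a v i ≤ α b v i + 2 * M / (k + 1) := by
        intro k
        set K : ℝ := (k : ℝ) + 1 with hK
        have hKpos : (0:ℝ) < K := by positivity
        set u : V := K • v with hu
        have h1 : α a u i ≤ dist (φ a i) (φ b i) + α b u i
            + dist (φ (u +ᵥ b) i) (φ (u +ᵥ a) i) :=
          dist_triangle4 _ (φ b i) (φ (u +ᵥ b) i) _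
        have h2 : dist (φ a i) (φ b i) ≤ M := hcomp a b i
        have h3 : dist (φ (u +ᵥ b) i) (φ (u +ᵥ a) i) ≤ M := by
          have := hcomp (u +ᵥ b) (u +ᵥ a) i
          rwa [vadd_vsub_vadd_cancel_left, ← neg_vsub_eq_vsub_rev, norm_neg] at this
        have ha : α a u i = K * α a v i := by
          rw [hu, hscalep a v K hKpos]; rfl
        have hb : α b u i = K * α b v i := by
          rw [hu, hscalep b v K hKpos]; rfl
        rw [ha, hb] at h1
        have h4 : K * α a v i ≤ K * α b v i + 2 * M := by linarith
        have h8 : α a v i - α b v i ≤ 2 * M / K := by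
          rw [le_div_iff₀ hKpos]; nlinarith
        linarith
      have htend : Filter.Tendsto (fun k : ℕ => α b v i + 2 * M / (k + 1))
          Filter.atTop (nhds (α b v i + 0)) := by
        refine Filter.Tendsto.const_add _ ?_
        apply Filter.Tendsto.div_atTop tendsto_const_nhds
        exact Filter.tendsto_atTop_add_const_right _ 1 tendsto_natCast_atTop_atTop
      rw [add_zero] at htend
      exact ge_of_tendsto' htend hk
    intro a b v
    funext i
    exact le_antisymm (key a b v i) (key b a v i)
  -- negation
  have hneg : ∀ (a : A) (v : V), α a (-v) = α a v := by
    intro a v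
    have h1 : ∀ i, α a (-v) i = α (-v +ᵥ a) v i := by
      intro i
      have h2 : v +ᵥ (-v +ᵥ a) = a := by
        rw [vadd_vadd, add_neg_cancel, zero_vadd]
      simp only [hαdef, h2]
      exact dist_comm _ _
    funext i
    rw [h1 i, hbase (-v +ᵥ a) a v]
  -- full homogeneity
  have hhomog : ∀ (a : A) (t : ℝ) (v : V), α a (t • v) = |t| • α a v := by
    intro a t v
    rcases lt_trichotomy t 0 with h | h | h
    · have : t • v = (-t) • (-v) := by rw [smul_neg, neg_smul, neg_neg]
      rw [this, hscalep a (-v) (-t) (by linarith), hneg, abs_of_neg h]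
    · subst h; rw [zero_smul, hαzero, abs_zero, zero_smul]
    · rw [hscalep a v t h, abs_of_pos h]
  refine ⟨?_, ?_, ?_, ?_, ?_⟩
  · intro a b v i
    exact congrFun (hbase a b v) i
  · intro a t v i
    exact congrFun (hhomog a t v) i
  · intro a v w i
    have h1 := htri a v w i
    have h2 := congrFun (hbase (v +ᵥ a) a w) i
    simp only [Pi.add_apply] at h1
    rw [h2] at h1
    exact h1
  · intro a b i
    rw [vsub_vadd]
  · intro a v
    exact hΦα a v
end

section
/- The Minkowski rank of the half-line ℝ₊ = [0,∞) with the standard metric is 0, while the product ℝ₊ × ℝ₊ with the metric d((x₁,x₂),(y₁,y₂)) = |x₁−y₁| + |x₂−y₂| contains an isometrically embedded copy of ℝ (namely t ↦ (−t,0) for t ≤ 0 and t ↦ (0,t) for t ≥ 0), so its Minkowski rank is at least 1. Hence Minkowski rank is not additive for Φ(x₁,x₂) = x₁ + x₂. -/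
def minkowskiRankGE (X : Type*) (d : X → X → ℝ) (k : ℕ) : Prop :=
  ∃ N : (Fin k → ℝ) → ℝ,
    (∀ x : Fin k → ℝ, N x = 0 ↔ x = 0) ∧
    (∀ x y : Fin k → ℝ, N (x + y) ≤ N x + N y) ∧
    (∀ (c : ℝ) (x : Fin k → ℝ), N (c • x) = |c| * N x) ∧
    ∃ f : (Fin k → ℝ) → X, ∀ v w : Fin k → ℝ, d (f v) (f w) = N (v - w)

noncomputable def minkowskiRank (X : Type*) (d : X → X → ℝ) : ℕ∞ :=
  sSup {k : ℕ∞ | ∃ m : ℕ, k = (m : ℕ∞) ∧ minkowskiRankGE X d m}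

lemma aux_dist (s t : ℝ) :
    dist (Real.toNNReal (-s)) (Real.toNNReal (-t)) +
      dist (Real.toNNReal s) (Real.toNNReal t) = |s - t| := by
  rw [NNReal.dist_eq, NNReal.dist_eq, Real.coe_toNNReal', Real.coe_toNNReal',
    Real.coe_toNNReal', Real.coe_toNNReal']
  rcases le_total s 0 with hs | hs <;> rcases le_total t 0 with ht | ht <;>
    rcases le_total s t with hst | hst <;>
    simp [max_eq_left, max_eq_right, abs_of_nonneg, abs_of_nonpos, *] <;>
    linarith

lemma aux_zero (m : ℕ) (h : minkowskiRankGE NNReal (fun a b => dist a b) m) : m = 0 := by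
  by_contra hm
  obtain ⟨N, hN0, hNadd, hNsmul, f, hf⟩ := h
  set e : Fin m → ℝ := fun _ => 1 with he
  have hene : e ≠ 0 := by
    intro h
    have := congrFun h ⟨0, Nat.pos_of_ne_zero hm⟩
    simp [he] at this
  have hane : N e ≠ 0 := fun h => hene ((hN0 e).mp h)
  have haneg : N (-e) = N e := by
    have := hNsmul (-1) e; simpa using this
  have hge : 0 ≤ N e := by
    have h0 : N 0 = 0 := (hN0 0).mpr rfl
    have := hNadd e (-e)
    simp [h0, haneg] at this
    linarith
  have ha : 0 < N e := lt_of_le_of_ne hge (Ne.symm hane)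
  set a := N e
  have key : ∀ t s : ℝ, |((f (t • e) : ℝ)) - ((f (s • e)) : ℝ)| = |t - s| * a := by
    intro t s
    have := hf (t • e) (s • e)
    dsimp only at this
    rw [NNReal.dist_eq] at this
    rw [this, ← sub_smul, hNsmul]
  set c : ℝ := (f ((0:ℝ) • e) : ℝ) with hc
  have hc0 : 0 ≤ c := (f ((0:ℝ) • e)).2
  set t : ℝ := (2*c+2)/a with ht
  have hta : t * a = 2*c+2 := div_mul_cancel₀ _ (ne_of_gt ha)
  have htpos : 0 ≤ t := by positivity
  have h1 : (f (t • e) : ℝ) = 3*c+2 := by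
    have := key t 0
    rw [sub_zero, abs_of_nonneg htpos, hta] at this
    have hnn : (0:ℝ) ≤ (f (t • e) : ℝ) := (f (t • e)).2
    rcases abs_eq (by linarith : (0:ℝ) ≤ 2*c+2) |>.mp this with h | h <;> linarith
  have h2 : (f ((-t) • e) : ℝ) = 3*c+2 := by
    have := key (-t) 0
    rw [sub_zero, abs_neg, abs_of_nonneg htpos, hta] at this
    have hnn : (0:ℝ) ≤ (f ((-t) • e) : ℝ) := (f ((-t) • e)).2
    rcases abs_eq (by linarith : (0:ℝ) ≤ 2*c+2) |>.mp this with h | h <;> linarith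
  have h3 := key t (-t)
  rw [h1, h2, sub_self, abs_zero, sub_neg_eq_add, abs_of_nonneg (by linarith : (0:ℝ) ≤ t + t)] at h3
  nlinarith

/-- `rank_M(ℝ₊) = 0`, while the `ℓ¹`-product `ℝ₊ × ℝ₊` contains an
isometric copy of `ℝ` (the concatenation of the two boundary rays), so its
Minkowski rank is at least `1`; hence the Minkowski rank is not additive for
`Φ(x₁,x₂) = x₁ + x₂`. -/
theorem stmt_18 :
    minkowskiRank NNReal (fun a b => dist a b) = 0 ∧
    (∀ s t : ℝ,
      dist (Real.toNNReal (-s)) (Real.toNNReal (-t)) +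
        dist (Real.toNNReal s) (Real.toNNReal t) = |s - t|) ∧
    1 ≤ minkowskiRank (NNReal × NNReal) (fun p q => dist p.1 q.1 + dist p.2 q.2) ∧
    minkowskiRank (NNReal × NNReal) (fun p q => dist p.1 q.1 + dist p.2 q.2) ≠
      minkowskiRank NNReal (fun a b => dist a b) +
        minkowskiRank NNReal (fun a b => dist a b) := by
  have h0 : minkowskiRank NNReal (fun a b => dist a b) = 0 := by
    apply le_antisymm _ zero_le
    apply sSup_le
    rintro k ⟨m, rfl, hm⟩
    simp [aux_zero m hm]
  have h1 : 1 ≤ minkowskiRank (NNReal × NNReal) (fun p q => dist p.1 q.1 + dist p.2 q.2) := by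
    apply le_sSup
    refine ⟨1, rfl, fun x => |x 0|, ?_, ?_, ?_, fun v => (Real.toNNReal (-(v 0)), Real.toNNReal (v 0)), ?_⟩
    · intro x
      constructor
      · intro h
        funext i
        have : i = 0 := Subsingleton.elim i 0
        simpa [this] using abs_eq_zero.mp h
      · rintro rfl; simp
    · intro x y; simpa using abs_add_le (x 0) (y 0)
    · intro c x; simp [abs_mul]
    · intro v w
      simpa [Pi.sub_apply] using aux_dist (v 0) (w 0)
  refine ⟨h0, aux_dist, h1, ?_⟩
  rw [h0]
  intro h
  rw [h] at h1
  simp at h1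
end
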